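/- arXiv:2203.00670 — 6 statements merged into one kernel-verified Lean document; each statement's English description precedes it below -/
import Mathlib

section
/- For a prime p and integers 0 ≤ a < b, the sum over i from a+1 to b of (1 + v_p(i)), where v_p(i) is the p-adic valuation of i, is at most (p/(p-1))·(b-a) + log_p(b). -/
open Finset

private lemma padicValNat_factorial_eq_sum (p : ℕ) (hp : p.Prime) (n : ℕ) :
    padicValNat p (Nat.factorial n) = ∑ i ∈ Finset.Ioc 0 n, padicValNat p i := by
  induction n with
  | zero => simp [padicValNat.one]
  | succ n ih =>
    haveI : Fact p.Prime := ⟨hp⟩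
    have h1 : Finset.Ioc 0 (n + 1) = insert (n + 1) (Finset.Ioc 0 n) := by
      ext x; simp [Finset.mem_Ioc, Finset.mem_insert]; omega
    rw [Nat.factorial_succ, padicValNat.mul (Nat.succ_ne_zero n) n.factorial_ne_zero, h1,
      Finset.sum_insert (by simp), ih]

/-- For a prime `p` and integers `0 ≤ a < b`, the sum over `i` from `a+1` to `b` of
`1 + v_p(i)` is at most `(p/(p-1))·(b-a) + log_p(b)`. -/
theorem stmt0 (p : ℕ) (hp : p.Prime) (a b : ℕ) (hab : a < b) :
    (∑ i ∈ Finset.Icc (a + 1) b, (1 + (padicValNat p i : ℝ))) ≤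
      (p : ℝ) / ((p : ℝ) - 1) * ((b : ℝ) - (a : ℝ)) + Real.log b / Real.log p := by
  haveI : Fact p.Prime := ⟨hp⟩
  have hp2 : 2 ≤ p := hp.two_le
  have hpR : (1 : ℝ) < p := by exact_mod_cast Nat.lt_of_lt_of_le one_lt_two hp2
  have hpR0 : (0 : ℝ) < p := lt_trans one_pos hpR
  have hne : (p : ℝ) - 1 ≠ 0 := by linarith
  set K := Nat.log p b + 1 with hK
  have hb0 : b ≠ 0 := by omega
  have habR : (a : ℝ) < b := by exact_mod_cast hab
  -- the nat identity: Legendre on both factorials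
  have hlogb : Nat.log p b < K := Nat.lt_succ_self _
  have hloga : Nat.log p a < K := lt_of_le_of_lt (Nat.log_mono_right hab.le) hlogb
  have hnat : (∑ k ∈ Finset.Ico 1 K, a / p ^ k) + ∑ i ∈ Finset.Ioc a b, padicValNat p i
      = ∑ k ∈ Finset.Ico 1 K, b / p ^ k := by
    rw [← padicValNat_factorial hloga, ← padicValNat_factorial hlogb,
      padicValNat_factorial_eq_sum p hp a, padicValNat_factorial_eq_sum p hp b]
    exact Finset.sum_Ioc_consecutive _ (Nat.zero_le a) hab.le
  -- real version
  have hIcc : Finset.Icc (a + 1) b = Finset.Ioc a b := Finset.Icc_add_one_left_eq_Ioc a b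
  have hreal : (∑ i ∈ Finset.Ioc a b, (padicValNat p i : ℝ))
      = ∑ k ∈ Finset.Ico 1 K, (((b / p ^ k : ℕ) : ℝ) - ((a / p ^ k : ℕ) : ℝ)) := by
    have := congrArg (Nat.cast : ℕ → ℝ) hnat
    push_cast at this
    rw [Finset.sum_sub_distrib]
    linarith
  -- pointwise bound
  have hpt : ∀ k ∈ Finset.Ico 1 K, ((b / p ^ k : ℕ) : ℝ) - ((a / p ^ k : ℕ) : ℝ)
      ≤ ((b : ℝ) - a) * ((1 : ℝ) / p) ^ k + 1 := by
    intro k _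
    have hq : (0 : ℝ) < (p : ℝ) ^ k := by positivity
    have h1 : ((b / p ^ k : ℕ) : ℝ) ≤ (b : ℝ) / (p : ℝ) ^ k := by
      have := Nat.cast_div_le (m := b) (n := p ^ k) (α := ℝ)
      push_cast at this
      exact this
    have h2 : (a : ℝ) / (p : ℝ) ^ k - 1 ≤ ((a / p ^ k : ℕ) : ℝ) := by
      have hqn : 0 < p ^ k := Nat.pow_pos hp.pos
      have hdm := Nat.div_add_mod a (p ^ k)
      have hm : a % p ^ k < p ^ k := Nat.mod_lt a hqn
      have hlt : a < (a / p ^ k + 1) * p ^ k := by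
        nlinarith [hdm, hm]
      have hlt' : (a : ℝ) < (((a / p ^ k : ℕ) : ℝ) + 1) * (p : ℝ) ^ k := by
        exact_mod_cast hlt
      rw [sub_le_iff_le_add, div_le_iff₀ hq]
      nlinarith
    have h3 : ((b : ℝ) - a) * ((1 : ℝ) / p) ^ k
        = (b : ℝ) / (p : ℝ) ^ k - (a : ℝ) / (p : ℝ) ^ k := by
      rw [div_pow, one_pow, mul_one_div, sub_div]
    rw [h3]
    linarith
  -- geometric sum bound
  have hgeom : (∑ k ∈ Finset.Ico 1 K, ((1 : ℝ) / p) ^ k) ≤ 1 / ((p : ℝ) - 1) := by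
    have hr1 : ((1 : ℝ) / p) ≠ 1 := by
      intro h
      have : (p : ℝ) = 1 := by field_simp at h; linarith
      linarith
    have hrneg : ((1 : ℝ) / p) - 1 < 0 := by
      have : (1 : ℝ) / p < 1 := by rw [div_lt_one hpR0]; exact hpR
      linarith
    rw [geom_sum_Ico hr1 (by omega : 1 ≤ K), div_le_iff_of_neg hrneg]
    have hEq : (1 / ((p : ℝ) - 1)) * ((1 : ℝ) / p - 1) = -(1 / p) := by
      field_simp
      ring
    have hrK : (0 : ℝ) ≤ ((1 : ℝ) / p) ^ K := by positivity
    rw [hEq, pow_one]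
    linarith
  -- log bound
  have hlog : ((Nat.log p b : ℕ) : ℝ) ≤ Real.log b / Real.log p := by
    have hple : (p : ℝ) ^ (Nat.log p b) ≤ (b : ℝ) := by
      exact_mod_cast Nat.pow_log_le_self p hb0
    have hlogp : (0 : ℝ) < Real.log p := Real.log_pos hpR
    rw [le_div_iff₀ hlogp]
    calc ((Nat.log p b : ℕ) : ℝ) * Real.log p = Real.log ((p : ℝ) ^ (Nat.log p b)) := by
          rw [Real.log_pow]
      _ ≤ Real.log b := Real.log_le_log (by positivity) hple
  -- assemble
  rw [Finset.sum_add_distrib, hIcc, hreal]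
  have hcard : (∑ _i ∈ Finset.Ioc a b, (1 : ℝ)) = (b : ℝ) - a := by
    rw [Finset.sum_const, Nat.card_Ioc, nsmul_eq_mul, mul_one]
    push_cast [Nat.cast_sub hab.le]
    ring
  rw [hcard]
  have hsum2 : (∑ k ∈ Finset.Ico 1 K, (((b / p ^ k : ℕ) : ℝ) - ((a / p ^ k : ℕ) : ℝ)))
      ≤ ((b : ℝ) - a) * (1 / ((p : ℝ) - 1)) + ((Nat.log p b : ℕ) : ℝ) := by
    calc (∑ k ∈ Finset.Ico 1 K, (((b / p ^ k : ℕ) : ℝ) - ((a / p ^ k : ℕ) : ℝ)))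
        ≤ ∑ k ∈ Finset.Ico 1 K, (((b : ℝ) - a) * ((1 : ℝ) / p) ^ k + 1) :=
          Finset.sum_le_sum hpt
      _ = ((b : ℝ) - a) * (∑ k ∈ Finset.Ico 1 K, ((1 : ℝ) / p) ^ k) + ((Nat.log p b : ℕ) : ℝ) := by
          rw [Finset.sum_add_distrib, ← Finset.mul_sum, Finset.sum_const, Nat.card_Ico,
            nsmul_eq_mul, mul_one]
          norm_num [hK]
      _ ≤ ((b : ℝ) - a) * (1 / ((p : ℝ) - 1)) + ((Nat.log p b : ℕ) : ℝ) := by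
          have hba : (0 : ℝ) ≤ (b : ℝ) - a := by linarith
          gcongr
  have hfinal : (b : ℝ) - a + (((b : ℝ) - a) * (1 / ((p : ℝ) - 1)))
      = (p : ℝ) / ((p : ℝ) - 1) * ((b : ℝ) - (a : ℝ)) := by
    field_simp [hne]
    ring
  linarith
end

section
/- Let |−| : C → Γ be a valuation on a stable category, i.e., a function on objects with values in a partially ordered abelian group such that |X| ≥ 0, |X ⊕ Y| = |X| + |Y|, and |Y| ≤ |X| + |Z| for every cofiber sequence X → Y → Z. If X lies in the thick subcategory generated by Y, then there exists a natural number N such that |Σ^k X| ≤ N · max over a finite set of shifts of |Σ^j Y|; in particular, for a rotation-invariant valuation (one with |ΣX| = |X|), there exists N with |X| ≤ N · |Y|. -/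
open CategoryTheory CategoryTheory.Limits CategoryTheory.Pretriangulated

universe v u

variable {C : Type u} [Category.{v} C] [HasZeroObject C] [HasShift C ℤ]
  [Preadditive C] [∀ n : ℤ, (CategoryTheory.shiftFunctor C n).Additive] [Pretriangulated C]

/-- `ThickGen Y X` : the object `X` lies in the thick subcategory generated by `Y`,
i.e. `X` is built from `Y` in finitely many steps by (de)suspension, extensions in
distinguished triangles, and retracts. -/
inductive ThickGen (Y : C) : C → Prop
  | base : ThickGen Y Y
  | shift (Z : C) (k : ℤ) : ThickGen Y Z → ThickGen Y ((shiftFunctor C k).obj Z)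
  | ext (T : Triangle C) (hT : T ∈ distTriang C) :
      ThickGen Y T.obj₁ → ThickGen Y T.obj₃ → ThickGen Y T.obj₂
  | retract (Z A : C) (i : Z ⟶ A) (r : A ⟶ Z) (hir : i ≫ r = 𝟙 Z) :
      ThickGen Y A → ThickGen Y Z

/-- If `|−| : C → Γ` is a valuation on a stable category (nonnegative, additive on sums,
subadditive on cofiber sequences, compatible with the shift via `σ`) and `X` lies in the
thick subcategory generated by `Y`, then `|X|` is bounded by a finite nonnegative
`ℤ[σ^{±1}]`-combination of shifts of `|Y|`; in particular if the valuation is rotation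
invariant there is an `N : ℕ` with `|X| ≤ N·|Y|`. -/
theorem stmt2 [HasBinaryBiproducts C]
    {Γ : Type*} [AddCommMonoid Γ] [PartialOrder Γ] [IsOrderedAddMonoid Γ]
    (v : C → Γ) (σ : Γ →+ Γ) (hσ : Monotone σ)
    (hiso : ∀ {A B : C}, Nonempty (A ≅ B) → v A = v B)
    (h0 : ∀ Z : C, 0 ≤ v Z)
    (hsum : ∀ A B : C, v (A ⊞ B) = v A + v B)
    (htri : ∀ T : Triangle C, (T ∈ distTriang C) → v T.obj₂ ≤ v T.obj₁ + v T.obj₃)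
    (hshift : ∀ Z : C, v ((shiftFunctor C (1 : ℤ)).obj Z) = σ (v Z))
    (X Y : C) (hXY : ThickGen Y X) :
    (∃ (s : Finset ℤ) (N : ℤ → ℕ),
      v X ≤ ∑ j ∈ s, N j • v ((shiftFunctor C j).obj Y)) ∧
    ((∀ Z : C, v ((shiftFunctor C (1 : ℤ)).obj Z) = v Z) →
      ∃ N : ℕ, v X ≤ N • v Y) := by

  -- A retract has smaller valuation.
  have hretract : ∀ (Z A : C) (i : Z ⟶ A) (r : A ⟶ Z), i ≫ r = 𝟙 Z → v Z ≤ v A := by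
    intro Z A i r hir
    obtain ⟨W, p, w, hT⟩ := distinguished_cocone_triangle i
    have hw : w = 0 := by
      have h1 : w ≫ i⟦(1:ℤ)⟧' = 0 := comp_distTriang_mor_zero₃₁ _ hT
      have : w = w ≫ i⟦(1:ℤ)⟧' ≫ r⟦(1:ℤ)⟧' := by
        rw [← CategoryTheory.Functor.map_comp, hir, CategoryTheory.Functor.map_id, Category.comp_id]
      rw [this, ← Category.assoc, h1, Limits.zero_comp]
    have hip : i ≫ p = 0 := comp_distTriang_mor_zero₁₂ _ hT
    -- morphism of triangles to the biproduct triangle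
    let φ : Triangle.mk i p w ⟶ binaryBiproductTriangle Z W :=
      { hom₁ := 𝟙 Z
        hom₂ := biprod.lift r p
        hom₃ := 𝟙 W
        comm₁ := by
          show i ≫ biprod.lift r p = 𝟙 Z ≫ biprod.inl
          ext
          · simp [hir]
          · simp [hip]
        comm₂ := by
          show p ≫ 𝟙 W = biprod.lift r p ≫ biprod.snd
          simp
        comm₃ := by
          show w ≫ (shiftFunctor C 1).map (𝟙 Z) = 𝟙 W ≫ 0
          simp [hw] }
    have : IsIso φ.hom₂ := isIso₂_of_isIso₁₃ φ hT
      (binaryBiproductTriangle_distinguished Z W)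
      (by dsimp [φ]; exact IsIso.id _) (by dsimp [φ]; exact IsIso.id _)
    have hAiso : v A = v (Z ⊞ W) := hiso ⟨@asIso _ _ _ _ φ.hom₂ this⟩
    calc v Z = v Z + 0 := (add_zero _).symm
    _ ≤ v Z + v W := add_le_add_right (h0 W) _
    _ = v (Z ⊞ W) := (hsum Z W).symm
    _ = v A := hAiso.symm
  have key : ∀ (X' : C), ThickGen Y X' → ∀ k : ℤ, ∃ (s : Finset ℤ) (N : ℤ → ℕ),
      v ((shiftFunctor C k).obj X') ≤ ∑ j ∈ s, N j • v ((shiftFunctor C j).obj Y) := by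
    intro X' h
    induction h with
    | base =>
        intro k
        exact ⟨{k}, fun _ => 1, by simp⟩
    | shift Z m h ih =>
        intro k
        obtain ⟨s, N, hb⟩ := ih (m + k)
        refine ⟨s, N, ?_⟩
        have e : v ((shiftFunctor C k).obj ((shiftFunctor C m).obj Z))
            = v ((shiftFunctor C (m + k)).obj Z) :=
          hiso ⟨((shiftFunctorAdd C m k).app Z).symm⟩
        rw [e]; exact hb
    | ext T hT h1 h3 ih1 ih3 =>
        intro k
        obtain ⟨s1, N1, hb1⟩ := ih1 k
        obtain ⟨s3, N3, hb3⟩ := ih3 k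
        have hTk := Pretriangulated.Triangle.shift_distinguished T hT k
        have hmid : v ((shiftFunctor C k).obj T.obj₂) ≤
            v ((shiftFunctor C k).obj T.obj₁) + v ((shiftFunctor C k).obj T.obj₃) :=
          htri _ hTk
        refine ⟨s1 ∪ s3, fun j => N1 j + N3 j, ?_⟩
        have hs1 : ∑ j ∈ s1, N1 j • v ((shiftFunctor C j).obj Y)
            ≤ ∑ j ∈ s1 ∪ s3, N1 j • v ((shiftFunctor C j).obj Y) :=
          Finset.sum_le_sum_of_subset_of_nonneg Finset.subset_union_left
            (fun j _ _ => nsmul_nonneg (h0 _) _)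
        have hs3 : ∑ j ∈ s3, N3 j • v ((shiftFunctor C j).obj Y)
            ≤ ∑ j ∈ s1 ∪ s3, N3 j • v ((shiftFunctor C j).obj Y) :=
          Finset.sum_le_sum_of_subset_of_nonneg Finset.subset_union_right
            (fun j _ _ => nsmul_nonneg (h0 _) _)
        calc v ((shiftFunctor C k).obj T.obj₂)
            ≤ v ((shiftFunctor C k).obj T.obj₁) + v ((shiftFunctor C k).obj T.obj₃) := hmid
        _ ≤ (∑ j ∈ s1 ∪ s3, N1 j • v ((shiftFunctor C j).obj Y))
            + ∑ j ∈ s1 ∪ s3, N3 j • v ((shiftFunctor C j).obj Y) :=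
            add_le_add (hb1.trans hs1) (hb3.trans hs3)
        _ = ∑ j ∈ s1 ∪ s3, (N1 j + N3 j) • v ((shiftFunctor C j).obj Y) := by
            rw [← Finset.sum_add_distrib]
            exact Finset.sum_congr rfl (fun j _ => (add_nsmul _ _ _).symm)
    | retract Z A i r hir h ih =>
        intro k
        obtain ⟨s, N, hb⟩ := ih k
        refine ⟨s, N, le_trans ?_ hb⟩
        exact hretract _ _ ((shiftFunctor C k).map i) ((shiftFunctor C k).map r)
          (by rw [← CategoryTheory.Functor.map_comp, hir, CategoryTheory.Functor.map_id])
  obtain ⟨s, N, hb⟩ := key X hXY 0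
  have hX0 : v X = v ((shiftFunctor C (0 : ℤ)).obj X) :=
    hiso ⟨((shiftFunctorZero C ℤ).app X).symm⟩
  refine ⟨⟨s, N, hX0 ▸ hb⟩, ?_⟩
  intro hrot
  have hj : ∀ j : ℤ, v ((shiftFunctor C j).obj Y) = v Y := by
    intro j
    induction j using Int.induction_on with
    | zero => exact hiso ⟨(shiftFunctorZero C ℤ).app Y⟩
    | succ n hn =>
        have e : v ((shiftFunctor C ((n : ℤ) + 1)).obj Y)
            = v ((shiftFunctor C (1 : ℤ)).obj ((shiftFunctor C (n : ℤ)).obj Y)) :=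
          hiso ⟨(shiftFunctorAdd C (n : ℤ) 1).app Y⟩
        rw [e, hrot, hn]
    | pred n hn =>
        have e : v ((shiftFunctor C (-(n : ℤ))).obj Y)
            = v ((shiftFunctor C (1 : ℤ)).obj ((shiftFunctor C (-(n : ℤ) - 1)).obj Y)) :=
          hiso ⟨(shiftFunctorAdd' C (-(n : ℤ) - 1) 1 (-(n : ℤ)) (by ring)).app Y⟩
        rw [e, hrot] at hn
        exact hn
  refine ⟨∑ j ∈ s, N j, ?_⟩
  calc v X ≤ ∑ j ∈ s, N j • v ((shiftFunctor C j).obj Y) := hX0 ▸ hb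
  _ = ∑ j ∈ s, N j • v Y := Finset.sum_congr rfl (fun j _ => by rw [hj j])
  _ = (∑ j ∈ s, N j) • v Y := (Finset.sum_smul).symm
end

section
/- Let p(n) denote the number of partitions of n into powers of 2 (binary partitions). Then log p(n) = (1/(2 log 2)) (log n)^2 + O(log log n · log n); in particular there exists a constant C such that |log p(n) − (log n)^2/(2 log 2)| ≤ C · max(1, log log n · log n) for all n ≥ 2. -/
/-- The number of partitions of `n` into powers of `2` (binary partitions). -/
noncomputable def binaryPartitions (n : ℕ) : ℕ :=
  Nat.card {P : n.Partition // ∀ i ∈ P.parts, ∃ k : ℕ, i = 2 ^ k}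

open Finset

lemma count_mul_le_sum (s : Multiset ℕ) (x : ℕ) : s.count x * x ≤ s.sum := by
  classical
  obtain ⟨u, hu⟩ := Multiset.le_iff_exists_add.mp (Multiset.filter_le (x = ·) s)
  have h1 : (s.filter (x = ·)).sum = s.count x * x := by
    simp [Multiset.filter_eq, Multiset.sum_replicate]
  calc s.count x * x = (s.filter (x = ·)).sum := h1.symm
    _ ≤ (s.filter (x = ·)).sum + u.sum := Nat.le_add_right _ _
    _ = s.sum := by rw [← Multiset.sum_add, ← hu]

lemma binary_upper (n : ℕ) (hn : 2 ≤ n) :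
    binaryPartitions n ≤ ∏ k ∈ Finset.range (Nat.log 2 n + 1), (n / 2 ^ k + 1) := by
  classical
  set K := Nat.log 2 n with hK
  have hcard : (∏ k ∈ Finset.range (K+1), (n / 2 ^ k + 1)) =
      Nat.card (∀ k : Fin (K+1), Fin (n / 2 ^ (k:ℕ) + 1)) := by
    rw [Nat.card_eq_fintype_card, Fintype.card_pi]
    simp [Fin.prod_univ_eq_prod_range (fun k => n / 2 ^ k + 1) (K+1)]
  rw [binaryPartitions, hcard]
  have hb : ∀ (P : {P : n.Partition // ∀ i ∈ P.parts, ∃ k : ℕ, i = 2 ^ k}) (k : Fin (K+1)),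
      (P : n.Partition).parts.count (2 ^ (k:ℕ)) < n / 2 ^ (k:ℕ) + 1 := by
    intro P k
    have h := count_mul_le_sum (P : n.Partition).parts (2 ^ (k:ℕ))
    rw [(P : n.Partition).parts_sum] at h
    exact Nat.lt_succ_of_le ((Nat.le_div_iff_mul_le (by positivity)).mpr h)
  apply Nat.card_le_card_of_injective
    (fun (P : {P : n.Partition // ∀ i ∈ P.parts, ∃ k : ℕ, i = 2 ^ k}) (k : Fin (K+1)) =>
      (⟨(P : n.Partition).parts.count (2 ^ (k:ℕ)), hb P k⟩ : Fin _))
  intro P Q h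
  ext1
  ext1
  ext m
  by_cases hm : m ∈ (P : n.Partition).parts ∨ m ∈ (Q : n.Partition).parts
  · obtain ⟨k, rfl⟩ : ∃ k, m = 2 ^ k := hm.elim (P.2 m) (Q.2 m)
    have hkn : 2 ^ k ≤ n := by
      rcases hm with h' | h'
      · exact (P : n.Partition).parts_sum ▸
          Multiset.single_le_sum (fun x _ => Nat.zero_le x) _ h'
      · exact (Q : n.Partition).parts_sum ▸
          Multiset.single_le_sum (fun x _ => Nat.zero_le x) _ h'
    have hk : k ≤ K := (Nat.le_log_iff_pow_le one_lt_two (by omega)).mpr hkn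
    have := congrFun h ⟨k, Nat.lt_succ_of_le hk⟩
    simpa using congrArg Fin.val this
  · push_neg at hm
    rw [Multiset.count_eq_zero_of_notMem hm.1, Multiset.count_eq_zero_of_notMem hm.2]

lemma binary_lower (n : ℕ) (hn : 2 ≤ n) :
    (∏ k ∈ Finset.range (Nat.log 2 n), ((n / Nat.log 2 n) / 2 ^ (k+1) + 1))
      ≤ binaryPartitions n := by
  classical
  set K := Nat.log 2 n with hK
  set d : ℕ → ℕ := fun j => (n / K) / 2 ^ j with hd
  have hK1 : 1 ≤ K := (Nat.le_log_iff_pow_le one_lt_two (by omega)).mpr (by simpa using hn)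
  -- construct the map
  have hSle : ∀ m : (k : Fin K) → Fin (d ((k:ℕ)+1) + 1),
      (∑ k : Fin K, (m k : ℕ) * 2 ^ ((k:ℕ)+1)) ≤ n := by
    intro m
    have h1 : ∀ k : Fin K, (m k : ℕ) * 2 ^ ((k:ℕ)+1) ≤ n / K := by
      intro k
      calc (m k : ℕ) * 2 ^ ((k:ℕ)+1) ≤ d ((k:ℕ)+1) * 2 ^ ((k:ℕ)+1) :=
            Nat.mul_le_mul_right _ (Nat.lt_succ_iff.mp (m k).isLt)
        _ ≤ n / K := Nat.div_mul_le_self _ _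
    calc (∑ k : Fin K, (m k : ℕ) * 2 ^ ((k:ℕ)+1)) ≤ ∑ _k : Fin K, n / K :=
          Finset.sum_le_sum fun k _ => h1 k
      _ = K * (n / K) := by simp [mul_comm]
      _ ≤ n := Nat.mul_div_le n K
  set mkparts : ((k : Fin K) → Fin (d ((k:ℕ)+1) + 1)) → Multiset ℕ := fun m =>
    (∑ k : Fin K, Multiset.replicate (m k : ℕ) (2 ^ ((k:ℕ)+1)))
      + Multiset.replicate (n - ∑ k : Fin K, (m k : ℕ) * 2 ^ ((k:ℕ)+1)) 1 with hmk
  have hmem : ∀ m x, x ∈ mkparts m → (∃ j : ℕ, x = 2 ^ j) := by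
    intro m x hx
    rw [hmk, Multiset.mem_add] at hx
    rcases hx with hx | hx
    · rw [Multiset.mem_sum] at hx
      obtain ⟨k, _, hk⟩ := hx
      exact ⟨(k:ℕ)+1, Multiset.eq_of_mem_replicate hk⟩
    · exact ⟨0, by simpa using Multiset.eq_of_mem_replicate hx⟩
  have hsum : ∀ m, (mkparts m).sum = n := by
    intro m
    rw [hmk]
    simp only [Multiset.sum_add, Multiset.sum_replicate, smul_eq_mul, mul_one]
    rw [Multiset.sum_sum]
    simp only [Multiset.sum_replicate, smul_eq_mul]
    have := hSle m
    omega
  have hpos : ∀ m x, x ∈ mkparts m → 0 < x := by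
    intro m x hx
    obtain ⟨j, rfl⟩ := hmem m x hx
    positivity
  set f : ((k : Fin K) → Fin (d ((k:ℕ)+1) + 1)) →
      {P : n.Partition // ∀ i ∈ P.parts, ∃ k : ℕ, i = 2 ^ k} := fun m =>
    ⟨⟨mkparts m, fun hx => hpos m _ hx, hsum m⟩, hmem m⟩ with hf
  have hcount : ∀ m (k : Fin K), (mkparts m).count (2 ^ ((k:ℕ)+1)) = (m k : ℕ) := by
    intro m k
    rw [hmk]
    simp only [Multiset.count_add, Multiset.count_sum', Multiset.count_replicate]
    rw [Finset.sum_eq_single k]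
    · have h2 : (1:ℕ) ≠ 2 ^ ((k:ℕ)+1) := by
        have := Nat.one_lt_two_pow_iff (n := (k:ℕ)+1)
        omega
      simp [h2]
    · intro j _ hjk
      have hne : ¬ (2 : ℕ) ^ ((j:ℕ)+1) = 2 ^ ((k:ℕ)+1) := by
        intro hc
        have := Nat.pow_right_injective le_rfl hc
        exact hjk (Fin.ext (by omega))
      simp [hne]
    · intro h
      exact absurd (Finset.mem_univ k) h
  have hinj : Function.Injective f := by
    intro m m' hmm
    have hparts : mkparts m = mkparts m' := by
      have h2 : ((f m : n.Partition)).parts = ((f m' : n.Partition)).parts := by rw [hmm]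
      exact h2
    funext k
    exact Fin.ext (by rw [← hcount m k, ← hcount m' k, hparts])
  have hcard := Nat.card_le_card_of_injective f hinj
  rw [Nat.card_eq_fintype_card (α := (k : Fin K) → Fin (d ((k:ℕ)+1) + 1)),
    Fintype.card_pi] at hcard
  simp only [Fintype.card_fin] at hcard
  calc (∏ k ∈ range K, (n / K / 2 ^ (k+1) + 1))
      = ∏ k : Fin K, (d ((k:ℕ)+1) + 1) :=
        (Fin.prod_univ_eq_prod_range (fun k => d (k+1) + 1) K).symm
    _ ≤ _ := hcard

lemma one_le_binaryPartitions (n : ℕ) (hn : 2 ≤ n) : 1 ≤ binaryPartitions n :=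
  le_trans (Finset.one_le_prod' (fun k _ => Nat.succ_le_succ (Nat.zero_le _))) (binary_lower n hn)

lemma two_mul_le_two_pow {K : ℕ} (h : 1 ≤ K) : 2 * K ≤ 2 ^ K := by
  induction K with
  | zero => omega
  | succ k ih =>
    rcases Nat.lt_or_ge 1 (k+1) with h1 | h1
    · have hk : 1 ≤ k := by omega
      have h2 : 1 < 2 ^ k := Nat.one_lt_two_pow_iff.mpr (by omega)
      have := ih hk
      rw [pow_succ]
      omega
    · have : k = 0 := by omega
      subst this; norm_num

lemma gauss_real (m : ℕ) : ∑ k ∈ Finset.range (m+1), (k:ℝ) = (m:ℝ) * ((m:ℝ)+1) / 2 := by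
  have h := Finset.sum_range_id_mul_two (m+1)
  have h2 : ((∑ i ∈ Finset.range (m+1), i : ℕ) : ℝ) * 2 = ((m:ℝ)+1) * (m:ℝ) := by
    exact_mod_cast congrArg (fun x : ℕ => (x:ℝ)) h
  push_cast at h2 ⊢
  linarith

lemma log_binaryPartitions_le (n : ℕ) (hn : 2 ≤ n) :
    Real.log (binaryPartitions n) ≤
      ((Nat.log 2 n : ℝ) + 1) * (Real.log 2 + Real.log n)
        - Real.log 2 * ((Nat.log 2 n : ℝ) * ((Nat.log 2 n : ℝ) + 1) / 2) := by
  set K := Nat.log 2 n with hK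
  have hp := binary_upper n hn
  have hp1 : 1 ≤ binaryPartitions n := one_le_binaryPartitions n hn
  have h1 : Real.log (binaryPartitions n) ≤ Real.log (∏ k ∈ range (K+1), ((n / 2^k + 1 : ℕ) : ℝ)) := by
    rw [← Nat.cast_prod]
    exact Real.log_le_log (by exact_mod_cast hp1) (by exact_mod_cast hp)
  rw [Real.log_prod (fun k _ => by positivity)] at h1
  have h2 : ∀ k ∈ range (K+1),
      Real.log ((n / 2^k + 1 : ℕ) : ℝ) ≤ Real.log 2 + Real.log n - (k:ℝ) * Real.log 2 := by
    intro k hk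
    rw [Finset.mem_range] at hk
    have hk' : (2:ℕ)^k ≤ n := Nat.pow_le_of_le_log (by omega) (by omega)
    have hkr : (1:ℝ) ≤ (n:ℝ) / 2^k := by
      rw [le_div_iff₀ (by positivity)]
      exact_mod_cast by simpa using hk'
    have hc : ((n / 2 ^ k + 1 : ℕ) : ℝ) ≤ 2 * n / 2 ^ k := by
      push_cast
      have := Nat.cast_div_le (α := ℝ) (m := n) (n := 2^k)
      push_cast at this
      calc ((n / 2^k : ℕ):ℝ) + 1 ≤ (n:ℝ)/2^k + (n:ℝ)/2^k := by linarith
        _ = 2 * n / 2^k := by ring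
    calc Real.log ((n / 2^k + 1 : ℕ) : ℝ) ≤ Real.log (2 * n / 2^k) :=
          Real.log_le_log (by positivity) hc
      _ = Real.log 2 + Real.log n - (k:ℝ) * Real.log 2 := by
          rw [Real.log_div (by positivity) (by positivity),
            Real.log_mul (by norm_num) (by positivity), Real.log_pow]
  have h3 := Finset.sum_le_sum h2
  have h4 : ∑ k ∈ range (K+1), (Real.log 2 + Real.log n - (k:ℝ) * Real.log 2)
      = ((K:ℝ)+1) * (Real.log 2 + Real.log n)
        - Real.log 2 * ((K:ℝ)*((K:ℝ)+1)/2) := by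
    rw [Finset.sum_sub_distrib, Finset.sum_const, Finset.card_range, ← Finset.sum_mul,
      gauss_real K]
    push_cast
    ring
  rw [h4] at h3
  linarith

lemma gauss_real' (m : ℕ) : ∑ k ∈ Finset.range m, ((k:ℝ)+1) = (m:ℝ)*((m:ℝ)+1)/2 := by
  induction m with
  | zero => simp
  | succ p ih => rw [Finset.sum_range_succ, ih]; push_cast; ring

lemma log_binaryPartitions_ge (n : ℕ) (hn : 2 ≤ n) :
    (Nat.log 2 n : ℝ) * Real.log n
        - (Nat.log 2 n : ℝ) * Real.log (2 * (Nat.log 2 n : ℝ))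
        - Real.log 2 * ((Nat.log 2 n : ℝ) * ((Nat.log 2 n : ℝ) + 1) / 2)
      ≤ Real.log (binaryPartitions n) := by
  set K := Nat.log 2 n with hK
  have hK1 : 1 ≤ K := (Nat.le_log_iff_pow_le one_lt_two (by omega)).mpr (by simpa using hn)
  have hKpos : 0 < K := hK1
  have hn2K : 2 * K ≤ n :=
    le_trans (two_mul_le_two_pow hK1) (Nat.pow_log_le_self 2 (by omega))
  have hp := binary_lower n hn
  have h1 : Real.log (∏ k ∈ range K, (((n / K) / 2^(k+1) + 1 : ℕ) : ℝ)) ≤ Real.log (binaryPartitions n) := by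
    rw [← Nat.cast_prod]
    refine Real.log_le_log ?_ (by exact_mod_cast hp)
    have : 0 < ∏ k ∈ range K, ((n / K) / 2^(k+1) + 1) :=
      Finset.prod_pos (fun k _ => Nat.succ_le_succ (Nat.zero_le _))
    exact_mod_cast this
  rw [Real.log_prod (fun k _ => by positivity)] at h1
  -- termwise lower bound
  set m := n / K with hm
  have hmlb : (n:ℝ) / (2 * K) ≤ (m:ℝ) := by
    have hdm : K * m + n % K = n := by rw [hm]; exact Nat.div_add_mod n K
    have hmod : n % K < K := Nat.mod_lt n hKpos
    have hlt : n < K * (m + 1) := by rw [Nat.mul_succ]; omega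
    have hltr : (n:ℝ) < (K:ℝ) * ((m:ℝ) + 1) := by exact_mod_cast hlt
    have h2K : (2:ℝ) * K ≤ (n:ℝ) := by exact_mod_cast hn2K
    have hKr : (0:ℝ) < (K:ℝ) := by exact_mod_cast hKpos
    rw [div_le_iff₀ (by positivity)]
    nlinarith
  have h2 : ∀ k ∈ range K,
      Real.log n - Real.log (2 * (K:ℝ)) - ((k:ℝ)+1) * Real.log 2
        ≤ Real.log ((m / 2^(k+1) + 1 : ℕ) : ℝ) := by
    intro k _
    set d := m / 2^(k+1) with hd
    have hdlb : (m:ℝ) / 2^(k+1) < (d:ℝ) + 1 := by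
      have hdm : 2^(k+1) * d + m % 2^(k+1) = m := by rw [hd]; exact Nat.div_add_mod m (2^(k+1))
      have hmod : m % 2^(k+1) < 2^(k+1) := Nat.mod_lt m (by positivity)
      have hlt : m < 2^(k+1) * (d + 1) := by rw [Nat.mul_succ]; omega
      have hltr : (m:ℝ) < (2:ℝ)^(k+1) * ((d:ℝ) + 1) := by exact_mod_cast hlt
      rw [div_lt_iff₀ (by positivity)]
      linarith
    have hKr : (0:ℝ) < (K:ℝ) := by exact_mod_cast hKpos
    have hchain : (n:ℝ) / (2 * K * 2^(k+1)) ≤ (d:ℝ) + 1 := by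
      have hstep : (n:ℝ) / (2 * K * 2^(k+1)) ≤ (m:ℝ) / 2^(k+1) := by
        rw [div_le_div_iff₀ (by positivity) (by positivity)]
        have hnm : (n:ℝ) ≤ (m:ℝ) * (2*K) := by
          rw [div_le_iff₀ (by positivity)] at hmlb
          exact hmlb
        calc (n:ℝ) * 2^(k+1) ≤ ((m:ℝ) * (2*K)) * 2^(k+1) :=
              mul_le_mul_of_nonneg_right hnm (by positivity)
          _ = (m:ℝ) * (2 * K * 2^(k+1)) := by ring
      linarith
    have hexp : Real.log ((n:ℝ) / (2 * K * 2^(k+1)))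
        = Real.log n - Real.log (2 * (K:ℝ)) - ((k:ℝ)+1) * Real.log 2 := by
      rw [Real.log_div (by positivity) (by positivity),
        Real.log_mul (by positivity) (by positivity), Real.log_pow]
      push_cast
      ring
    calc Real.log n - Real.log (2 * (K:ℝ)) - ((k:ℝ)+1) * Real.log 2
        = Real.log ((n:ℝ) / (2 * K * 2^(k+1))) := hexp.symm
      _ ≤ Real.log ((d:ℝ) + 1) := Real.log_le_log (by positivity) hchain
      _ = Real.log ((m / 2^(k+1) + 1 : ℕ) : ℝ) := by push_cast; rfl
  have h3 := Finset.sum_le_sum h2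
  have h4 : ∑ k ∈ range K, (Real.log n - Real.log (2 * (K:ℝ)) - ((k:ℝ)+1) * Real.log 2)
      = (K:ℝ) * Real.log n - (K:ℝ) * Real.log (2 * (K:ℝ))
        - Real.log 2 * ((K:ℝ)*((K:ℝ)+1)/2) := by
    have hg : ∑ k ∈ range K, ((k:ℝ)+1) = (K:ℝ)*((K:ℝ)+1)/2 := gauss_real' K
    rw [Finset.sum_sub_distrib, Finset.sum_sub_distrib, ← Finset.sum_mul, hg]
    simp only [Finset.sum_const, Finset.card_range, nsmul_eq_mul]
    ring
  rw [h4] at h3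
  exact le_trans (le_of_eq rfl) (le_trans h3 h1)

set_option maxHeartbeats 1000000 in
/-- `log p(n) = (1/(2 log 2)) (log n)^2 + O(log log n · log n)` for binary partitions. -/
theorem stmt3 : ∃ C : ℝ, ∀ n : ℕ, 2 ≤ n →
    |Real.log (binaryPartitions n) - (Real.log n) ^ 2 / (2 * Real.log 2)| ≤
      C * max 1 (Real.log (Real.log n) * Real.log n) := by
  use 15
  intro n hn
  set K := Nat.log 2 n with hK
  set r : ℝ := (K : ℝ) with hr
  set L : ℝ := Real.log n with hL
  set a : ℝ := Real.log 2 with ha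
  have ha1 : 0.6931471803 < a := Real.log_two_gt_d9
  have ha2 : a < 0.6931471808 := Real.log_two_lt_d9
  have hK1 : 1 ≤ K := (Nat.le_log_iff_pow_le one_lt_two (by omega)).mpr (by simpa using hn)
  have hr1 : (1:ℝ) ≤ r := by rw [hr]; exact_mod_cast hK1
  have hra : r * a ≤ L := by
    have h1 : (2:ℕ)^K ≤ n := Nat.pow_log_le_self 2 (by omega)
    have h2 := Real.log_le_log (by positivity) (show ((2:ℝ)^K) ≤ (n:ℝ) by exact_mod_cast h1)
    rwa [Real.log_pow] at h2
  have hLub : L < (r+1) * a := by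
    have h1 : n < 2^(K+1) := Nat.lt_pow_succ_log_self (by norm_num) n
    have h2 := Real.log_lt_log (by positivity)
      (show (n:ℝ) < (2:ℝ)^(K+1) by exact_mod_cast h1)
    rw [Real.log_pow] at h2
    push_cast at h2
    linarith
  have haL : a ≤ L := Real.log_le_log (by norm_num) (by exact_mod_cast hn)
  have hLpos : 0 < L := by linarith
  set M : ℝ := max 1 (Real.log L) with hM
  have hM1 : (1:ℝ) ≤ M := le_max_left _ _
  have hlogLM : Real.log L ≤ M := le_max_right _ _
  have hLM0 : (0:ℝ) ≤ L * M := by nlinarith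
  have hLLM : L ≤ L * M := by nlinarith
  have hub := log_binaryPartitions_le n hn
  have hlb := log_binaryPartitions_ge n hn
  rw [← hK, ← hr, ← hL, ← ha] at hub hlb
  have hrle : r ≤ 1.45 * L := by
    nlinarith [mul_le_mul_of_nonneg_left hra (show (0:ℝ) ≤ 1.45 by norm_num),
      mul_lt_mul_of_pos_left ha1 (show (0:ℝ) < r by linarith)]
  have hlog2r_nonneg : 0 ≤ Real.log (2 * r) := by
    rw [← Real.log_one]
    exact Real.log_le_log (by norm_num) (by linarith)
  have hlog2r : Real.log (2 * r) ≤ 2.15 * M := by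
    have h1 : Real.log (2 * r) ≤ Real.log (2 * L / a) := by
      apply Real.log_le_log (by linarith)
      rw [le_div_iff₀ (by linarith)]
      nlinarith
    have h2 : Real.log (2 * L / a) = a + Real.log L - Real.log a := by
      rw [Real.log_div (by positivity) (by linarith),
        Real.log_mul (by norm_num) (by positivity)]
    have h3 : -Real.log a ≤ 0.45 := by
      have h4 : Real.log a⁻¹ ≤ a⁻¹ - 1 := Real.log_le_sub_one_of_pos (inv_pos.mpr (by linarith))
      rw [Real.log_inv] at h4
      have h5 : a⁻¹ ≤ 1.45 := by
        rw [inv_le_comm₀ (by linarith) (by norm_num)]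
        linarith
      linarith
    linarith
  have hr2r : r * Real.log (2 * r) ≤ 3.2 * (L * M) := by
    have h6 := mul_le_mul hrle hlog2r hlog2r_nonneg (by linarith)
    nlinarith
  have key : |Real.log (binaryPartitions n) - L^2/(2*a)| ≤ 5 * (L * M) := by
    rw [abs_le]
    constructor
    · have h2 : L^2/(2*a) ≤ L + r*L - a*(r*(r+1)/2) := by
        rw [div_le_iff₀ (by linarith)]
        nlinarith [mul_nonneg (sub_nonneg.mpr hra) (show (0:ℝ) ≤ a - (L - r*a) by linarith),
          mul_nonneg (show (0:ℝ) ≤ a by linarith) (le_of_lt hLpos),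
          mul_nonneg (mul_nonneg (show (0:ℝ) ≤ a by linarith) (show (0:ℝ) ≤ a by linarith)) (show (0:ℝ) ≤ r by linarith)]
      linarith
    · have h2 : (r+1)*(a+L) - a*(r*(r+1)/2) - 4*L ≤ L^2/(2*a) := by
        rw [le_div_iff₀ (by linarith)]
        nlinarith [sq_nonneg (L - r*a),
          mul_nonneg (show (0:ℝ) ≤ a by linarith) (sub_nonneg.mpr hra),
          mul_nonneg (show (0:ℝ) ≤ a by linarith) (le_of_lt hLpos),
          mul_nonneg (show (0:ℝ) ≤ a by linarith) (show (0:ℝ) ≤ a by linarith)]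
      linarith
  have hfin : 5 * (L * M) ≤ 15 * max 1 (Real.log L * L) := by
    have hmax1 : (1:ℝ) ≤ max 1 (Real.log L * L) := le_max_left _ _
    rcases le_or_gt (Real.log L) 1 with h | h
    · have hMeq : M = 1 := max_eq_left h
      have hLe : L ≤ 3 := by
        have h1 : L ≤ Real.exp 1 := by
          rw [← Real.log_le_iff_le_exp hLpos]
          exact h
        have := Real.exp_one_lt_d9
        linarith
      rw [hMeq]
      nlinarith
    · have hMeq : M = Real.log L := max_eq_right h.le
      have h2 : Real.log L * L ≤ max 1 (Real.log L * L) := le_max_right _ _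
      rw [hMeq]
      nlinarith
  calc |Real.log (binaryPartitions n) - L^2/(2*a)| ≤ 5 * (L * M) := key
    _ ≤ 15 * max 1 (Real.log L * L) := hfin
end

section
/- Fix a prime p and a constant c ≥ 1. Let R be a graded polynomial algebra over a field with generators x_1, x_2, ... where the degree of x_i lies in the interval [p^i/c, c·p^i]. Then the logarithm of the total dimension of R in degrees ≤ n satisfies log(dim R_{≤n}) = (1/(2 log p)) (log n)^2 + O(log log n · log n). -/
set_option maxHeartbeats 1600000

open Finset


/-- The number of monomials of total degree at most `n` in a graded polynomial algebra
whose `i`-th generator (for `i ≥ 1`, here indexed by `i - 1`) has degree `d (i-1)`;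
this is the dimension of `R_{≤ n}`. -/
noncomputable def polyCountLE (d : ℕ → ℕ) (n : ℕ) : ℕ :=
  Nat.card {a : ℕ →₀ ℕ // (a.sum fun i m => m * d i) ≤ n}

lemma term_le_sum (d : ℕ → ℕ) (a : ℕ →₀ ℕ) (i : ℕ) :
    a i * d i ≤ a.sum fun j m => m * d j := by
  classical
  by_cases h : a i = 0
  · simp [h]
  · rw [Finsupp.sum]
    exact Finset.single_le_sum (f := fun j => a j * d j) (fun _ _ => Nat.zero_le _)
      (Finsupp.mem_support_iff.2 h)

section
variable (d : ℕ → ℕ) (n k : ℕ)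

/-- the injection for the upper bound -/
lemma upper_inj (hpos : ∀ i, 1 ≤ d i) (hk : ∀ i, d i ≤ n → i < k) :
    ∃ f : {a : ℕ →₀ ℕ // (a.sum fun i m => m * d i) ≤ n} →
        ((i : Fin k) → Fin (n / d i + 1)), Function.Injective f := by
  classical
  have hbd : ∀ (a : {a : ℕ →₀ ℕ // (a.sum fun i m => m * d i) ≤ n}) (i : ℕ),
      a.1 i < n / d i + 1 := by
    intro a i
    have h1 : a.1 i * d i ≤ n := le_trans (term_le_sum d a.1 i) a.2
    have := (Nat.le_div_iff_mul_le (hpos i)).2 h1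
    omega
  refine ⟨fun a i => ⟨a.1 i, hbd a i⟩, ?_⟩
  intro a b hab
  have key : ∀ i : ℕ, a.1 i = b.1 i := by
    intro i
    by_cases hi : i < k
    · have := congrFun hab ⟨i, hi⟩
      simpa using congrArg Fin.val this
    · have ha : a.1 i = 0 := by
        by_contra h
        exact hi (hk i (le_trans (Nat.le_mul_of_pos_left _ (by omega)) (le_trans (term_le_sum d a.1 i) a.2)))
      have hb : b.1 i = 0 := by
        by_contra h
        exact hi (hk i (le_trans (Nat.le_mul_of_pos_left _ (by omega)) (le_trans (term_le_sum d b.1 i) b.2)))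
      rw [ha, hb]
  exact Subtype.ext (Finsupp.ext key)

lemma A_finite (hpos : ∀ i, 1 ≤ d i) (hk : ∀ i, d i ≤ n → i < k) :
    Finite {a : ℕ →₀ ℕ // (a.sum fun i m => m * d i) ≤ n} := by
  obtain ⟨f, hf⟩ := upper_inj d n k hpos hk
  exact Finite.of_injective f hf

lemma polyCountLE_upper (hpos : ∀ i, 1 ≤ d i) (hk : ∀ i, d i ≤ n → i < k) :
    polyCountLE d n ≤ ∏ i ∈ range k, (n / d i + 1) := by
  obtain ⟨f, hf⟩ := upper_inj d n k hpos hk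
  have := Nat.card_le_card_of_injective f hf
  rw [Nat.card_pi] at this
  simp only [Nat.card_eq_fintype_card, Fintype.card_fin] at this
  rw [Fin.prod_univ_eq_prod_range (fun i => n / d i + 1) k] at this
  exact this

lemma polyCountLE_pos (hpos : ∀ i, 1 ≤ d i) (hk : ∀ i, d i ≤ n → i < k) :
    1 ≤ polyCountLE d n := by
  have : Finite {a : ℕ →₀ ℕ // (a.sum fun i m => m * d i) ≤ n} :=
    A_finite d n k hpos hk
  have hne : Nonempty {a : ℕ →₀ ℕ // (a.sum fun i m => m * d i) ≤ n} :=
    ⟨⟨0, by simp⟩⟩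
  exact Nat.card_pos

lemma polyCountLE_lower (m : ℕ) (hpos : ∀ i, 1 ≤ d i) (hk : ∀ i, d i ≤ n → i < k) :
    ∏ i ∈ range m, (n / (m * d i) + 1) ≤ polyCountLE d n := by
  classical
  have hfin : Finite {a : ℕ →₀ ℕ // (a.sum fun i m => m * d i) ≤ n} :=
    A_finite d n k hpos hk
  set g : ((i : Fin m) → Fin (n / (m * d i) + 1)) → (ℕ → ℕ) :=
    fun t i => if h : i < m then (t ⟨i, h⟩ : ℕ) else 0 with hg
  have hmem : ∀ t i, g t i ≠ 0 → i ∈ range m := by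
    intro t i h
    simp only [hg] at h
    rw [mem_range]
    by_contra hi
    rw [dif_neg hi] at h
    exact h rfl
  set ψ : ((i : Fin m) → Fin (n / (m * d i) + 1)) →
      {a : ℕ →₀ ℕ // (a.sum fun i m => m * d i) ≤ n} :=
    fun t => ⟨Finsupp.onFinset (range m) (g t) (hmem t), by
      rw [Finsupp.onFinset_sum (hmem t) (fun a => zero_mul (d a))]
      have hle : ∀ i ∈ range m, g t i * d i ≤ n / m := by
        intro i hi
        rw [mem_range] at hi
        have h1 : g t i ≤ n / (m * d i) := by
          simp only [hg, dif_pos hi]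
          exact Nat.lt_succ_iff.1 (t ⟨i, hi⟩).2
        calc g t i * d i ≤ (n / (m * d i)) * d i := Nat.mul_le_mul_right _ h1
          _ = ((n / m) / d i) * d i := by rw [Nat.div_div_eq_div_mul]
          _ ≤ n / m := Nat.div_mul_le_self _ _
      calc ∑ i ∈ range m, g t i * d i ≤ ∑ i ∈ range m, (n / m) :=
            Finset.sum_le_sum hle
        _ = m * (n / m) := by simp [mul_comm]
        _ ≤ n := Nat.mul_div_le n m⟩ with hψ
  have hinj : Function.Injective ψ := by
    intro t t' h
    have : ∀ i, g t i = g t' i := by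
      intro i
      have := congrArg (fun x => (x.1 : ℕ → ℕ) i) h
      simpa [hψ] using this
    funext i
    have := this i.1
    apply Fin.ext
    simpa [hg, dif_pos i.2] using this
  have := Nat.card_le_card_of_injective ψ hinj
  rw [Nat.card_pi] at this
  simp only [Nat.card_eq_fintype_card, Fintype.card_fin] at this
  rw [Fin.prod_univ_eq_prod_range (fun i => n / (m * d i) + 1) m] at this
  exact this

end

lemma sum_range_cast (k : ℕ) : ∑ i ∈ range k, ((i:ℝ)+1) = k*(k+1)/2 := by
  induction k with
  | zero => simp
  | succ k ih => rw [Finset.sum_range_succ, ih]; push_cast; ring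

lemma log_le_three (n : ℕ) (hn : 2 ≤ n) :
    Real.log n ≤ 3 * max 1 (Real.log (Real.log n) * Real.log n) := by
  have hM : (1:ℝ) ≤ max 1 (Real.log (Real.log n) * Real.log n) := le_max_left _ _
  have h16 : Real.log 16 = 4 * Real.log 2 := by
    rw [show (16:ℝ) = 2^(4:ℕ) by norm_num, Real.log_pow]; push_cast; ring
  rcases le_or_gt n 15 with h | h
  · have h1 : Real.log n ≤ Real.log 16 :=
      Real.log_le_log (by positivity) (by exact_mod_cast (by omega : n ≤ 16))
    have := Real.log_two_lt_d9
    linarith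
  · have h16n : (16:ℝ) ≤ n := by exact_mod_cast (by omega : 16 ≤ n)
    have hL16 : Real.log 16 ≤ Real.log n := Real.log_le_log (by norm_num) h16n
    have hlog2 := Real.log_two_gt_d9
    have hexp := Real.exp_one_lt_d9
    have he : Real.exp 1 ≤ Real.log n := by linarith
    have hL0 : 0 < Real.log n := lt_of_lt_of_le (Real.exp_pos 1) he
    have h1 : 1 ≤ Real.log (Real.log n) := by
      rw [Real.le_log_iff_exp_le hL0]; simpa using he
    have h2 : Real.log n ≤ Real.log (Real.log n) * Real.log n :=
      le_mul_of_one_le_left hL0.le h1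
    have h3 := le_max_right (1:ℝ) (Real.log (Real.log n) * Real.log n)
    linarith


lemma auxUP (a L P g l2 : ℝ) (ha : a = g + L) (h2 : 0 < l2) (hP : l2 ≤ P)
    (hL : 0 ≤ L) (hg : 0 ≤ g) :
    a^2/(2*P) ≤ L^2/(2*P) + (g/l2) * L + g^2/(2*l2) := by
  have hP0 : 0 < P := lt_of_lt_of_le h2 hP
  have h1 : a^2/(2*P) = L^2/(2*P) + (2*L*g + g^2)/(2*P) := by rw [ha]; ring
  have hnum : 0 ≤ 2*L*g + g^2 := by positivity
  have hh2 : (2*L*g + g^2)/(2*P) ≤ (2*L*g + g^2)/(2*l2) := by gcongr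
  have h3 : (2*L*g + g^2)/(2*l2) = (g/l2)*L + g^2/(2*l2) := by ring
  linarith

lemma keyUP (p : ℕ) (hp2 : 2 ≤ p) (c : ℝ) (hc : 1 ≤ c) (d : ℕ → ℕ)
    (hpos : ∀ i, 1 ≤ d i)
    (hd1 : ∀ i : ℕ, ((p : ℝ) ^ (i + 1)) / c ≤ (d i : ℝ)) (n : ℕ) (hn : 2 ≤ n) :
    Real.log (polyCountLE d n) ≤ (Real.log n)^2/(2*Real.log p)
      + (Real.log (2*c)/Real.log 2) * Real.log n + (Real.log (2*c))^2/(2*Real.log 2) := by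
  have hc0 : (0:ℝ) < c := lt_of_lt_of_le one_pos hc
  have hp0 : (0:ℝ) < p := by positivity
  have hp2' : (2:ℝ) ≤ p := by exact_mod_cast hp2
  have hn0 : (0:ℝ) < n := by positivity
  have hn2 : (2:ℝ) ≤ n := by exact_mod_cast hn
  set L := Real.log n with hL
  set P := Real.log p with hPdef
  have hlog2 : (0:ℝ) < Real.log 2 := Real.log_pos (by norm_num)
  have hP2 : Real.log 2 ≤ P := Real.log_le_log (by norm_num) hp2'
  have hP0 : 0 < P := lt_of_lt_of_le hlog2 hP2
  have hL2 : Real.log 2 ≤ L := Real.log_le_log (by norm_num) hn2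
  have hL0 : 0 < L := lt_of_lt_of_le hlog2 hL2
  have hcn2 : (2:ℝ) ≤ c * n := by nlinarith
  have hcn0 : (0:ℝ) < c * n := by linarith
  set k := ⌊Real.log (c*n) / P⌋₊ with hkdef
  have hlogcn : 0 < Real.log (c*n) := Real.log_pos (by linarith)
  have hk : ∀ i, d i ≤ n → i < k := by
    intro i hi
    have hdi : (d i : ℝ) ≤ n := by exact_mod_cast hi
    have h1 : (p:ℝ)^(i+1) ≤ c*n := by
      have := hd1 i
      rw [div_le_iff₀ hc0] at this
      nlinarith
    have h2 : ((i:ℝ)+1)*P ≤ Real.log (c*n) := by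
      have hl := Real.log_le_log (by positivity) h1
      rw [Real.log_pow] at hl
      push_cast at hl
      linarith
    have h3 : ((i+1 : ℕ):ℝ) ≤ Real.log (c*n)/P := by
      rw [le_div_iff₀ hP0]; push_cast; linarith
    have := Nat.le_floor h3
    omega
  have hcount := polyCountLE_upper d n k hpos hk
  have hpos1 := polyCountLE_pos d n k hpos hk
  -- step 1: log count ≤ sum of logs
  have hprodcast : ((∏ i ∈ range k, (n / d i + 1) : ℕ) : ℝ)
      = ∏ i ∈ range k, ((n / d i + 1 : ℕ) : ℝ) := by push_cast; rfl
  have hlogprod : Real.log (polyCountLE d n)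
      ≤ ∑ i ∈ range k, Real.log ((n / d i + 1 : ℕ) : ℝ) := by
    have h1 : Real.log (polyCountLE d n) ≤ Real.log ((∏ i ∈ range k, (n / d i + 1) : ℕ) : ℝ) :=
      Real.log_le_log (by exact_mod_cast hpos1) (by exact_mod_cast hcount)
    rw [hprodcast, Real.log_prod (s := range k) (f := fun i => ((n / d i + 1 : ℕ) : ℝ)) (fun i _ => by positivity)] at h1
    exact h1
  -- step 2: termwise bound
  have hterm : ∀ i ∈ range k, Real.log ((n / d i + 1 : ℕ) : ℝ)
      ≤ Real.log (2*c*n) - ((i:ℝ)+1)*P := by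
    intro i hi
    rw [mem_range] at hi
    have hik : ((i+1:ℕ):ℝ) ≤ Real.log (c*n)/P := by
      exact_mod_cast le_trans (by exact_mod_cast hi : ((i+1:ℕ):ℝ) ≤ (k:ℝ))
        (Nat.floor_le (by positivity))
    have h4 : ((i:ℝ)+1)*P ≤ Real.log (c*n) := by
      rw [← le_div_iff₀ hP0]; push_cast at hik ⊢; linarith
    have h5 : (p:ℝ)^(i+1) ≤ c*n := by
      have h6 : Real.log ((p:ℝ)^(i+1)) ≤ Real.log (c*n) := by
        rw [Real.log_pow]; push_cast; linarith
      calc (p:ℝ)^(i+1) = Real.exp (Real.log ((p:ℝ)^(i+1))) := (Real.exp_log (by positivity)).symm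
        _ ≤ Real.exp (Real.log (c*n)) := Real.exp_le_exp.2 h6
        _ = c*n := Real.exp_log hcn0
    have hppos : (0:ℝ) < (p:ℝ)^(i+1) := by positivity
    have hd0 : (0:ℝ) < (p:ℝ)^(i+1)/c := by positivity
    have h6 : ((n / d i : ℕ):ℝ) ≤ c*n/(p:ℝ)^(i+1) := by
      calc ((n / d i : ℕ):ℝ) ≤ (n:ℝ)/(d i) := Nat.cast_div_le
        _ ≤ (n:ℝ)/((p:ℝ)^(i+1)/c) := div_le_div_of_nonneg_left hn0.le hd0 (hd1 i)
        _ = c*n/(p:ℝ)^(i+1) := by field_simp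
    have h7 : (1:ℝ) ≤ c*n/(p:ℝ)^(i+1) := (one_le_div hppos).2 h5
    have h8 : ((n / d i + 1 : ℕ):ℝ) ≤ 2*c*n/(p:ℝ)^(i+1) := by
      push_cast
      have : 2*c*n/(p:ℝ)^(i+1) = c*n/(p:ℝ)^(i+1) + c*n/(p:ℝ)^(i+1) := by ring
      rw [this]
      push_cast at h6
      linarith
    have h9 : Real.log ((n / d i + 1 : ℕ):ℝ) ≤ Real.log (2*c*n/(p:ℝ)^(i+1)) :=
      Real.log_le_log (by positivity) h8
    have h10 : Real.log (2*c*n/(p:ℝ)^(i+1)) = Real.log (2*c*n) - ((i:ℝ)+1)*P := by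
      rw [Real.log_div (by positivity) (by positivity), Real.log_pow]
      push_cast; ring
    linarith
  have hsum := Finset.sum_le_sum hterm
  set a := Real.log (2*c*n) with hadef
  have hgauss : ∑ i ∈ range k, (a - ((i:ℝ)+1)*P) = k*a - P*(k*(k+1)/2) := by
    rw [Finset.sum_sub_distrib, Finset.sum_const, card_range, nsmul_eq_mul,
      ← Finset.sum_mul, sum_range_cast]
    ring
  have hmain : Real.log (polyCountLE d n) ≤ (k:ℝ)*a - P*(k*(k+1)/2) := by
    rw [← hgauss]; exact le_trans hlogprod hsum
  have ha0 : 0 < a := Real.log_pos (by nlinarith)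
  have hquad : (k:ℝ)*a - P*(k*(k+1)/2) ≤ a^2/(2*P) := by
    have hk0 : (0:ℝ) ≤ k := Nat.cast_nonneg k
    rw [le_div_iff₀ (by positivity : (0:ℝ) < 2*P)]
    nlinarith [sq_nonneg (a - P*(k:ℝ)), mul_nonneg hP0.le hk0]
  have hsplit : a = Real.log (2*c) + L := by
    rw [hadef, Real.log_mul (by positivity) (by positivity)]
  have hg0 : 0 < Real.log (2*c) := Real.log_pos (by linarith)
  have hfin : a^2/(2*P) ≤ L^2/(2*P) + (Real.log (2*c)/Real.log 2) * L
      + (Real.log (2*c))^2/(2*Real.log 2) :=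
    auxUP a L P (Real.log (2*c)) (Real.log 2) (by linarith [hsplit]) hlog2 hP2 hL0.le hg0.le
  calc Real.log (polyCountLE d n) ≤ (k:ℝ)*a - P*(k*(k+1)/2) := hmain
    _ ≤ a^2/(2*P) := hquad
    _ ≤ _ := hfin


lemma keyLOW (p : ℕ) (hp2 : 2 ≤ p) (c : ℝ) (hc : 1 ≤ c) (d : ℕ → ℕ)
    (hpos : ∀ i, 1 ≤ d i)
    (hd1 : ∀ i : ℕ, ((p : ℝ) ^ (i + 1)) / c ≤ (d i : ℝ))
    (hd2 : ∀ i : ℕ, (d i : ℝ) ≤ c * (p : ℝ) ^ (i + 1)) (n : ℕ) (hn : 2 ≤ n) :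
    (Real.log n)^2/(2*Real.log p) - Real.log (polyCountLE d n) ≤
      Real.log p/2 + (1/2 + (Real.log c - Real.log (Real.log 2))/Real.log 2) * Real.log n
      + (1/Real.log 2) * max 0 (Real.log (Real.log n) * Real.log n) := by
  have hc0 : (0:ℝ) < c := lt_of_lt_of_le one_pos hc
  have hp0 : (0:ℝ) < p := by positivity
  have hp2' : (2:ℝ) ≤ p := by exact_mod_cast hp2
  have hn0 : (0:ℝ) < n := by positivity
  have hn2 : (2:ℝ) ≤ n := by exact_mod_cast hn
  set L := Real.log n with hLdef
  set P := Real.log p with hPdef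
  have hlog2 : (0:ℝ) < Real.log 2 := Real.log_pos (by norm_num)
  have hP2 : Real.log 2 ≤ P := Real.log_le_log (by norm_num) hp2'
  have hP0 : 0 < P := lt_of_lt_of_le hlog2 hP2
  have hL2 : Real.log 2 ≤ L := Real.log_le_log (by norm_num) hn2
  have hL0 : 0 < L := lt_of_lt_of_le hlog2 hL2
  have hlogc : 0 ≤ Real.log c := Real.log_nonneg hc
  have hloglog2 : Real.log (Real.log 2) < 0 :=
    Real.log_neg hlog2 (by linarith [Real.log_two_lt_d9])
  have hcoef : 0 ≤ (Real.log c - Real.log (Real.log 2))/Real.log 2 := by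
    apply div_nonneg _ hlog2.le; linarith
  have hmax0 : 0 ≤ max 0 (Real.log L * L) := le_max_left _ _
  -- finiteness data
  have hcn2 : (2:ℝ) ≤ c * n := by nlinarith
  have hcn0 : (0:ℝ) < c * n := by linarith
  set k := ⌊Real.log (c*n) / P⌋₊ with hkdef
  have hk : ∀ i, d i ≤ n → i < k := by
    intro i hi
    have hdi : (d i : ℝ) ≤ n := by exact_mod_cast hi
    have h1 : (p:ℝ)^(i+1) ≤ c*n := by
      have := hd1 i
      rw [div_le_iff₀ hc0] at this
      nlinarith
    have h2 : ((i:ℝ)+1)*P ≤ Real.log (c*n) := by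
      have hl := Real.log_le_log (by positivity) h1
      rw [Real.log_pow] at hl
      push_cast at hl
      linarith
    have h3 : ((i+1 : ℕ):ℝ) ≤ Real.log (c*n)/P := by
      rw [le_div_iff₀ hP0]; push_cast; linarith
    have := Nat.le_floor h3
    omega
  have hpos1 := polyCountLE_pos d n k hpos hk
  have hlogcount0 : 0 ≤ Real.log (polyCountLE d n) :=
    Real.log_nonneg (by exact_mod_cast hpos1)
  set m := ⌊L/P⌋₊ with hmdef
  have hmle : (m:ℝ) ≤ L/P := Nat.floor_le (by positivity)
  have hmgt : L/P < m + 1 := Nat.lt_floor_add_one _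
  clear_value k m
  rcases Nat.eq_zero_or_pos m with hm0 | hm1
  · -- m = 0 : L < P
    have hLP : L < P := by
      rw [hm0] at hmgt
      push_cast at hmgt
      rw [div_lt_iff₀ hP0] at hmgt
      linarith
    have h1 : L^2/(2*P) ≤ L/2 := by
      rw [div_le_div_iff₀ (by positivity) (by norm_num)]
      nlinarith
    have e1 : 0 ≤ (Real.log c - Real.log (Real.log 2))/Real.log 2 * L :=
      mul_nonneg hcoef hL0.le
    have e2 : 0 ≤ 1/Real.log 2 * (max 0 (Real.log L * L)) :=
      mul_nonneg (by positivity) hmax0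
    have e3 : (1/2 + (Real.log c - Real.log (Real.log 2))/Real.log 2) * L
        = L/2 + (Real.log c - Real.log (Real.log 2))/Real.log 2 * L := by ring
    linarith
  · -- main case
    have hm1' : (1:ℝ) ≤ m := by exact_mod_cast hm1
    have hmP : (m:ℝ)*P ≤ L := by rw [le_div_iff₀ hP0] at hmle; linarith
    have hmP2 : L < ((m:ℝ)+1)*P := by rw [div_lt_iff₀ hP0] at hmgt; linarith
    have hm0' : (0:ℝ) < m := by linarith
    have hcount := polyCountLE_lower d n k m hpos hk
    -- log count ≥ sum
    have hprodcast : ((∏ i ∈ range m, (n / (m * d i) + 1) : ℕ) : ℝ)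
        = ∏ i ∈ range m, ((n / (m * d i) + 1 : ℕ) : ℝ) := by push_cast; rfl
    have hlogprod : ∑ i ∈ range m, Real.log ((n / (m * d i) + 1 : ℕ) : ℝ)
        ≤ Real.log (polyCountLE d n) := by
      have h1 : Real.log ((∏ i ∈ range m, (n / (m * d i) + 1) : ℕ) : ℝ)
          ≤ Real.log (polyCountLE d n) :=
        Real.log_le_log (by positivity) (by exact_mod_cast hcount)
      rw [hprodcast, Real.log_prod (s := range m) (f := fun i => ((n / (m * d i) + 1 : ℕ) : ℝ)) (fun i _ => by positivity)] at h1
      exact h1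
    have hterm : ∀ i ∈ range m, L - (Real.log m + Real.log c + ((i:ℝ)+1)*P)
        ≤ Real.log ((n / (m * d i) + 1 : ℕ) : ℝ) := by
      intro i hi
      have hppos : (0:ℝ) < (p:ℝ)^(i+1) := by positivity
      have hdpos : (0:ℝ) < (d i : ℝ) := by exact_mod_cast hpos i
      have hmd : (0:ℝ) < (m:ℝ) * (d i) := by positivity
      have h1 : (n:ℝ)/((m:ℝ)*(d i)) ≤ ((n / (m * d i) + 1 : ℕ):ℝ) := by
        have h2 : n < (m * d i) * (n / (m * d i) + 1) := Nat.lt_mul_div_succ n (by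
          have := hpos i
          positivity)
        have h3 : (n:ℝ) < ((m:ℝ) * (d i)) * (((n / (m * d i) : ℕ):ℝ) + 1) := by
          exact_mod_cast h2
        rw [div_le_iff₀ hmd]
        push_cast
        nlinarith
      have h4 : (n:ℝ)/((m:ℝ)*(c*(p:ℝ)^(i+1))) ≤ (n:ℝ)/((m:ℝ)*(d i)) := by
        apply div_le_div_of_nonneg_left hn0.le hmd
        have := hd2 i
        nlinarith
      have h5 : Real.log ((n:ℝ)/((m:ℝ)*(c*(p:ℝ)^(i+1))))
          ≤ Real.log ((n / (m * d i) + 1 : ℕ):ℝ) :=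
        Real.log_le_log (by positivity) (le_trans h4 h1)
      have h6 : Real.log ((n:ℝ)/((m:ℝ)*(c*(p:ℝ)^(i+1))))
          = L - (Real.log m + Real.log c + ((i:ℝ)+1)*P) := by
        rw [Real.log_div (by positivity) (by positivity),
          Real.log_mul (by positivity) (by positivity),
          Real.log_mul (by positivity) (by positivity), Real.log_pow]
        push_cast
        ring
      linarith
    have hsum := Finset.sum_le_sum hterm
    have hgauss : ∑ i ∈ range m, (L - (Real.log m + Real.log c + ((i:ℝ)+1)*P))
        = m*L - m*(Real.log m + Real.log c) - P*(m*(m+1)/2) := by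
      rw [Finset.sum_sub_distrib]
      rw [Finset.sum_add_distrib, Finset.sum_const, Finset.sum_const, card_range]
      rw [← Finset.sum_mul, sum_range_cast, nsmul_eq_mul, nsmul_eq_mul]
      ring
    have hmain : m*L - m*(Real.log m + Real.log c) - P*(m*(m+1)/2)
        ≤ Real.log (polyCountLE d n) := by
      rw [← hgauss]; exact le_trans hsum hlogprod
    -- (i) quadratic part
    have t1 : 0 ≤ L - P*m := by nlinarith
    have t2 : L - P*m ≤ P := by nlinarith
    have t3 : (L-P*m)^2 ≤ P^2 := by nlinarith
    have hi : L^2/(2*P) ≤ (m:ℝ)*L - P*(m:ℝ)^2/2 + P/2 := by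
      rw [div_le_iff₀ (by positivity : (0:ℝ) < 2*P)]
      nlinarith [t3]
    -- (iii) log part
    have hs0 : 0 ≤ Real.log m + Real.log c := by
      have : 0 ≤ Real.log m := Real.log_nonneg hm1'
      linarith
    have hmlog : Real.log m + Real.log c ≤ Real.log L - Real.log P + Real.log c := by
      have h1 : Real.log m ≤ Real.log (L/P) := Real.log_le_log hm0' hmle
      rw [Real.log_div hL0.ne' hP0.ne'] at h1
      linarith
    have hLP0 : 0 ≤ L/P := by positivity
    have hms : (m:ℝ) * (Real.log m + Real.log c)
        ≤ (L/P)*(Real.log L - Real.log P + Real.log c) := by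
      calc (m:ℝ) * (Real.log m + Real.log c) ≤ (L/P) * (Real.log m + Real.log c) :=
            mul_le_mul_of_nonneg_right hmle hs0
        _ ≤ (L/P)*(Real.log L - Real.log P + Real.log c) :=
            mul_le_mul_of_nonneg_left hmlog hLP0
    have hT1 : (L/P)*Real.log L ≤ (1/Real.log 2)*max 0 (Real.log L * L) := by
      rcases le_or_gt 0 (Real.log L) with h | h
      · have h1 : (L/P)*Real.log L ≤ (L/Real.log 2)*Real.log L := by
          apply mul_le_mul_of_nonneg_right _ h
          gcongr
        have h2 : (L/Real.log 2)*Real.log L = (1/Real.log 2)*(Real.log L * L) := by ring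
        have h3 : Real.log L * L ≤ max 0 (Real.log L * L) := le_max_right _ _
        calc (L/P)*Real.log L ≤ (1/Real.log 2)*(Real.log L * L) := by rw [← h2]; exact h1
          _ ≤ (1/Real.log 2)*max 0 (Real.log L * L) := by
              apply mul_le_mul_of_nonneg_left h3; positivity
      · have h1 : (L/P)*Real.log L ≤ 0 :=
          mul_nonpos_of_nonneg_of_nonpos hLP0 h.le
        have h2 : (0:ℝ) ≤ (1/Real.log 2)*max 0 (Real.log L * L) := by positivity
        linarith
    have hlogP : Real.log (Real.log 2) ≤ Real.log P := Real.log_le_log hlog2 hP2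
    have hT2 : (L/P)*(Real.log c - Real.log P)
        ≤ ((Real.log c - Real.log (Real.log 2))/Real.log 2)*L := by
      rcases le_or_gt 0 (Real.log c - Real.log P) with h | h
      · calc (L/P)*(Real.log c - Real.log P) ≤ (L/Real.log 2)*(Real.log c - Real.log P) := by
              apply mul_le_mul_of_nonneg_right _ h
              gcongr
          _ ≤ (L/Real.log 2)*(Real.log c - Real.log (Real.log 2)) := by
              apply mul_le_mul_of_nonneg_left _ (by positivity)
              linarith
          _ = ((Real.log c - Real.log (Real.log 2))/Real.log 2)*L := by ring
      · have h1 : (L/P)*(Real.log c - Real.log P) ≤ 0 :=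
          mul_nonpos_of_nonneg_of_nonpos hLP0 h.le
        have h2 : (0:ℝ) ≤ ((Real.log c - Real.log (Real.log 2))/Real.log 2)*L :=
          mul_nonneg hcoef hL0.le
        linarith
    have hsplit : (L/P)*(Real.log L - Real.log P + Real.log c)
        = (L/P)*Real.log L + (L/P)*(Real.log c - Real.log P) := by ring
    have hPm : P*(m:ℝ)/2 ≤ L/2 := by linarith
    have hexpand : P*((m:ℝ)*((m:ℝ)+1)/2) = P*(m:ℝ)^2/2 + P*(m:ℝ)/2 := by ring
    linarith [hmain, hi, hms, hT1, hT2]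


/-- If the generator `x_i` (for `i ≥ 1`) has degree in `[p^i/c, c·p^i]`, then
`log (dim R_{≤n}) = (1/(2 log p)) (log n)^2 + O(log log n · log n)`. -/
theorem stmt5 (p : ℕ) (hp : p.Prime) (c : ℝ) (hc : 1 ≤ c) (d : ℕ → ℕ)
    (hpos : ∀ i, 1 ≤ d i)
    (hd : ∀ i : ℕ, ((p : ℝ) ^ (i + 1)) / c ≤ (d i : ℝ) ∧ (d i : ℝ) ≤ c * (p : ℝ) ^ (i + 1)) :
    ∃ C : ℝ, ∀ n : ℕ, 2 ≤ n →
      |Real.log (polyCountLE d n) - (Real.log n) ^ 2 / (2 * Real.log p)| ≤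
        C * max 1 (Real.log (Real.log n) * Real.log n) := by
  have hp2 : 2 ≤ p := hp.two_le
  have hc0 : (0:ℝ) < c := lt_of_lt_of_le one_pos hc
  have hlog2 : (0:ℝ) < Real.log 2 := Real.log_pos (by norm_num)
  have hg0 : 0 ≤ Real.log (2*c) := Real.log_nonneg (by linarith)
  have hp2' : (2:ℝ) ≤ p := by exact_mod_cast hp2
  have hP2 : Real.log 2 ≤ Real.log p := Real.log_le_log (by norm_num) hp2'
  have hP0 : 0 < Real.log p := lt_of_lt_of_le hlog2 hP2
  have hloglog2 : Real.log (Real.log 2) < 0 :=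
    Real.log_neg hlog2 (by linarith [Real.log_two_lt_d9])
  have hlogc : 0 ≤ Real.log c := Real.log_nonneg hc
  have hcoef : 0 ≤ (Real.log c - Real.log (Real.log 2))/Real.log 2 := by
    apply div_nonneg _ hlog2.le; linarith
  refine ⟨3*(Real.log (2*c)/Real.log 2) + (Real.log (2*c))^2/(2*Real.log 2)
    + Real.log p/2 + 3*(1/2 + (Real.log c - Real.log (Real.log 2))/Real.log 2)
    + 1/Real.log 2, ?_⟩
  intro n hn
  have hn2 : (2:ℝ) ≤ n := by exact_mod_cast hn
  have hL2 : Real.log 2 ≤ Real.log n := Real.log_le_log (by norm_num) hn2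
  have hL0 : 0 < Real.log n := lt_of_lt_of_le hlog2 hL2
  have hup := keyUP p hp2 c hc d hpos (fun i => (hd i).1) n hn
  have hlow := keyLOW p hp2 c hc d hpos (fun i => (hd i).1) (fun i => (hd i).2) n hn
  have hM1 : (1:ℝ) ≤ max 1 (Real.log (Real.log n) * Real.log n) := le_max_left _ _
  have hM0 : (0:ℝ) ≤ max 1 (Real.log (Real.log n) * Real.log n) := by linarith
  have hL3 : Real.log n ≤ 3 * max 1 (Real.log (Real.log n) * Real.log n) := log_le_three n hn
  have hmaxle : max 0 (Real.log (Real.log n) * Real.log n)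
      ≤ max 1 (Real.log (Real.log n) * Real.log n) := max_le_max (by norm_num) le_rfl
  set M := max 1 (Real.log (Real.log n) * Real.log n) with hMdef
  set M0 := max 0 (Real.log (Real.log n) * Real.log n) with hM0def
  clear_value M M0
  rw [abs_sub_le_iff]
  constructor
  · have e1 : (Real.log (2*c)/Real.log 2) * Real.log n
        ≤ (Real.log (2*c)/Real.log 2) * (3*M) :=
      mul_le_mul_of_nonneg_left hL3 (div_nonneg hg0 hlog2.le)
    have e2 : (Real.log (2*c))^2/(2*Real.log 2)
        ≤ ((Real.log (2*c))^2/(2*Real.log 2)) * M :=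
      le_mul_of_one_le_right (by positivity) hM1
    have e3 : 0 ≤ (Real.log p/2) * M := mul_nonneg (by positivity) hM0
    have e4 : 0 ≤ (3*(1/2 + (Real.log c - Real.log (Real.log 2))/Real.log 2)) * M := by
      apply mul_nonneg _ hM0
      linarith
    have e5 : 0 ≤ (1/Real.log 2) * M := mul_nonneg (by positivity) hM0
    nlinarith [hup]
  · have f1 : Real.log p/2 ≤ (Real.log p/2) * M :=
      le_mul_of_one_le_right (by positivity) hM1
    have f2 : (1/2 + (Real.log c - Real.log (Real.log 2))/Real.log 2) * Real.log n
        ≤ (1/2 + (Real.log c - Real.log (Real.log 2))/Real.log 2) * (3*M) := by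
      apply mul_le_mul_of_nonneg_left hL3
      linarith
    have f3 : (1/Real.log 2) * M0 ≤ (1/Real.log 2) * M :=
      mul_le_mul_of_nonneg_left hmaxle (by positivity)
    have f4 : 0 ≤ (3*(Real.log (2*c)/Real.log 2)) * M := by
      apply mul_nonneg _ hM0
      positivity
    have f5 : 0 ≤ ((Real.log (2*c))^2/(2*Real.log 2)) * M := by
      apply mul_nonneg _ hM0
      positivity
    nlinarith [hlow]
end

section
/- Fix a prime p. Let R be the graded polynomial algebra over a field with exactly i generators in degree p^i for each i ≥ 1. Then log(dim R_{≤n}) = (1/(6 (log p)^2)) (log n)^3 + O(log log n · (log n)^2). -/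
open Finset

/-- The number of monomials of total degree at most `n` in a graded polynomial algebra
with exactly `i` generators in degree `p^i` for each `i ≥ 1`: generators are indexed by
pairs `(i, j)` with `j < i`, the generator `(i, j)` having degree `p^i`. -/
noncomputable def polyCountMay (p n : ℕ) : ℕ :=
  Nat.card {a : ℕ × ℕ →₀ ℕ //
    (∀ q ∈ a.support, q.2 < q.1) ∧ (a.sum fun q m => m * p ^ q.1) ≤ n}

lemma pi_card (L : ℕ) (c : ℕ → ℕ) :
    Nat.card (∀ i : Fin (L + 1), Fin i.val → Fin (c i.val)) =
      ∏ i ∈ range (L + 1), c i ^ i := by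
  rw [Nat.card_eq_fintype_card, Fintype.card_pi,
    ← Fin.prod_univ_eq_prod_range (fun i => c i ^ i) (L + 1)]
  refine Finset.prod_congr rfl fun i _ => ?_
  rw [Fintype.card_fun]
  simp

lemma term_le {p n : ℕ} (hp : 1 < p) (hn : n ≠ 0)
    {a : ℕ × ℕ →₀ ℕ} (h2 : (a.sum fun q m => m * p ^ q.1) ≤ n) {q : ℕ × ℕ}
    (hq : a q ≠ 0) : a q * p ^ q.1 ≤ n ∧ q.1 ≤ Nat.log p n := by
  have hmem : q ∈ a.support := Finsupp.mem_support_iff.2 hq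
  have h1 : a q * p ^ q.1 ≤ a.sum fun q m => m * p ^ q.1 :=
    Finset.single_le_sum (f := fun q => a q * p ^ q.1) (fun i _ => Nat.zero_le _) hmem
  have h3 : a q * p ^ q.1 ≤ n := h1.trans h2
  refine ⟨h3, (Nat.le_log_iff_pow_le hp hn).2 ?_⟩
  calc p ^ q.1 ≤ a q * p ^ q.1 := Nat.le_mul_of_pos_left _ (Nat.pos_of_ne_zero hq)
    _ ≤ n := h3

lemma upMap_exists (p n : ℕ) (hp : 1 < p) (hn : n ≠ 0) :
    ∃ f : {a : ℕ × ℕ →₀ ℕ //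
        (∀ q ∈ a.support, q.2 < q.1) ∧ (a.sum fun q m => m * p ^ q.1) ≤ n} →
      (∀ i : Fin (Nat.log p n + 1), Fin i.val → Fin (n / p ^ i.val + 1)),
      Function.Injective f := by
  refine ⟨fun a i j => ⟨a.val (i.val, j.val), ?_⟩, ?_⟩
  · rw [Nat.lt_succ_iff, Nat.le_div_iff_mul_le (Nat.pow_pos (by omega))]
    by_cases h0 : a.val (i.val, j.val) = 0
    · simp [h0]
    · exact (term_le hp hn a.2.2 h0).1
  · intro a b hab
    have key : ∀ q : ℕ × ℕ, q.2 < q.1 → q.1 ≤ Nat.log p n → a.val q = b.val q := by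
      intro q h1 h2
      have h3 := congrFun (congrFun hab ⟨q.1, Nat.lt_succ_of_le h2⟩) ⟨q.2, h1⟩
      simpa using congrArg Fin.val h3
    ext q
    by_cases ha0 : a.val q = 0 <;> by_cases hb0 : b.val q = 0
    · rw [ha0, hb0]
    · exact key q (b.2.1 q (Finsupp.mem_support_iff.2 hb0)) (term_le hp hn b.2.2 hb0).2
    · exact key q (a.2.1 q (Finsupp.mem_support_iff.2 ha0)) (term_le hp hn a.2.2 ha0).2
    · exact key q (a.2.1 q (Finsupp.mem_support_iff.2 ha0)) (term_le hp hn a.2.2 ha0).2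

lemma count_le (p n : ℕ) (hp : 1 < p) (hn : n ≠ 0) :
    polyCountMay p n ≤ ∏ i ∈ range (Nat.log p n + 1), (n / p ^ i + 1) ^ i := by
  obtain ⟨f, hf⟩ := upMap_exists p n hp hn
  rw [← pi_card (Nat.log p n) (fun i => n / p ^ i + 1)]
  exact Nat.card_le_card_of_injective f hf

lemma count_finite (p n : ℕ) (hp : 1 < p) (hn : n ≠ 0) :
    Finite {a : ℕ × ℕ →₀ ℕ //
      (∀ q ∈ a.support, q.2 < q.1) ∧ (a.sum fun q m => m * p ^ q.1) ≤ n} := by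
  obtain ⟨f, hf⟩ := upMap_exists p n hp hn
  exact Finite.of_injective f hf

lemma le_count (p n : ℕ) (hp : 1 < p) (hn : n ≠ 0) :
    ∏ i ∈ range (Nat.log p n + 1), (n / ((Nat.log p n + 1) ^ 2 * p ^ i) + 1) ^ i ≤
      polyCountMay p n := by
  haveI := count_finite p n hp hn
  set L := Nat.log p n with hL
  set K := (L + 1) ^ 2 with hK
  rw [← pi_card L (fun i => n / (K * p ^ i) + 1)]
  have hg : ∀ (f : ∀ i : Fin (L + 1), Fin i.val → Fin (n / (K * p ^ i.val) + 1))
      (q : ℕ × ℕ), (if h : q.1 < L + 1 ∧ q.2 < q.1 then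
        (f ⟨q.1, h.1⟩ ⟨q.2, h.2⟩).val else 0) ≠ 0 → q ∈ range (L+1) ×ˢ range (L+1) := by
    intro f q hq
    rw [dite_ne_right_iff] at hq
    have h := hq.choose
    simp only [mem_product, mem_range]
    omega
  refine Nat.card_le_card_of_injective
    (fun f => ⟨Finsupp.onFinset (range (L+1) ×ˢ range (L+1))
      (fun q => if h : q.1 < L + 1 ∧ q.2 < q.1 then
        (f ⟨q.1, h.1⟩ ⟨q.2, h.2⟩).val else 0) (hg f), ?_, ?_⟩) ?_
  · intro q hq
    have := Finsupp.mem_support_iff.1 hq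
    rw [Finsupp.onFinset_apply, dite_ne_right_iff] at this
    exact this.choose.2
  · -- sum bound
    set a := Finsupp.onFinset (range (L+1) ×ˢ range (L+1))
      (fun q => if h : q.1 < L + 1 ∧ q.2 < q.1 then
        (f ⟨q.1, h.1⟩ ⟨q.2, h.2⟩).val else 0) (hg f) with ha
    rw [Finsupp.sum]
    have hterm : ∀ q ∈ a.support, a q * p ^ q.1 ≤ n / K := by
      intro q hq
      have hne := Finsupp.mem_support_iff.1 hq
      rw [ha, Finsupp.onFinset_apply, dite_ne_right_iff] at hne
      have h := hne.choose
      have hval : a q ≤ n / (K * p ^ q.1) := by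
        rw [ha, Finsupp.onFinset_apply, dif_pos h]
        exact Nat.lt_succ_iff.1 (f ⟨q.1, h.1⟩ ⟨q.2, h.2⟩).isLt
      calc a q * p ^ q.1 ≤ n / (K * p ^ q.1) * p ^ q.1 :=
            Nat.mul_le_mul_right _ hval
        _ = n / K / p ^ q.1 * p ^ q.1 := by rw [Nat.div_div_eq_div_mul]
        _ ≤ n / K := Nat.div_mul_le_self _ _
    calc ∑ q ∈ a.support, a q * p ^ q.1 ≤ a.support.card • (n / K) :=
          Finset.sum_le_card_nsmul _ _ _ hterm
      _ = a.support.card * (n / K) := smul_eq_mul _ _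
      _ ≤ K * (n / K) := by
          refine Nat.mul_le_mul_right _ ?_
          have hsub : a.support ⊆ range (L+1) ×ˢ range (L+1) :=
            Finsupp.support_onFinset_subset
          have := Finset.card_le_card hsub
          simpa [hK, pow_two] using this
      _ ≤ n := by rw [mul_comm]; exact Nat.div_mul_le_self _ _
  · intro f₁ f₂ hf
    have h12 := congrArg Subtype.val hf
    simp only at h12
    funext i j
    have h3 := DFunLike.congr_fun h12 (i.val, j.val)
    have hcond : (i.val, j.val).1 < L + 1 ∧ (i.val, j.val).2 < (i.val, j.val).1 :=
      ⟨i.isLt, j.isLt⟩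
    rw [Finsupp.onFinset_apply, Finsupp.onFinset_apply, dif_pos hcond, dif_pos hcond] at h3
    exact Fin.ext (by simpa using h3)

lemma sum_id_real (L : ℕ) : ∑ i ∈ range (L + 1), (i : ℝ) = L * (L + 1) / 2 := by
  induction L with
  | zero => simp
  | succ L ih => rw [Finset.sum_range_succ, ih]; push_cast; ring

lemma sum_sq_real (L : ℕ) :
    ∑ i ∈ range (L + 1), (i : ℝ) ^ 2 = L * (L + 1) * (2 * L + 1) / 6 := by
  induction L with
  | zero => simp
  | succ L ih => rw [Finset.sum_range_succ, ih]; push_cast; ring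

lemma poly_bound (L : ℕ) (u : ℝ) (hu0 : 0 ≤ u) (h1 : (L : ℝ) ≤ u) (h2 : u ≤ L + 1) :
    |u * (L * (L + 1) / 2) - L * (L + 1) * (2 * L + 1) / 6 - u ^ 3 / 6| ≤ 2 * u := by
  set M := (L : ℝ) with hM
  have hM0 : 0 ≤ M := Nat.cast_nonneg L
  rcases Nat.eq_zero_or_pos L with h | h
  · subst h
    simp only [Nat.cast_zero] at hM
    rw [hM] at h1 h2 ⊢
    have hcube : u ^ 3 ≤ u := by
      nlinarith [mul_nonneg (mul_nonneg hu0 (by linarith : (0:ℝ) ≤ 1 - u))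
        (by linarith : (0:ℝ) ≤ 1 + u)]
    have h3 : 0 ≤ u ^ 3 := pow_nonneg hu0 3
    rw [abs_le]
    constructor <;> nlinarith [hcube, h3]
  · have hM1 : 1 ≤ M := Nat.one_le_cast.2 h
    rw [abs_le]
    constructor <;> nlinarith [mul_nonneg (sub_nonneg.2 h1) (sub_nonneg.2 h2),
      sq_nonneg (u - M), sq_nonneg (u - M - 1), mul_nonneg (sub_nonneg.2 hM1) (sub_nonneg.2 h1)]

lemma main_est (L : ℕ) (t x : ℝ) (ht : 0 < t) (hx : 0 ≤ x)
    (h1 : (L : ℝ) * t ≤ x) (h2 : x ≤ ((L : ℝ) + 1) * t) :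
    |∑ i ∈ range (L + 1), (i : ℝ) * (x - i * t) - x ^ 3 / (6 * t ^ 2)| ≤ 2 * x := by
  have hs : ∑ i ∈ range (L + 1), (i : ℝ) * (x - i * t)
      = x * (L * (L + 1) / 2) - t * (L * (L + 1) * (2 * L + 1) / 6) := by
    have : ∀ i ∈ range (L + 1), (i : ℝ) * (x - i * t) = x * i - t * (i : ℝ) ^ 2 := by
      intro i _; ring
    rw [Finset.sum_congr rfl this, Finset.sum_sub_distrib, ← Finset.mul_sum, ← Finset.mul_sum,
      sum_id_real, sum_sq_real]
  set u := x / t with hu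
  have hxu : x = u * t := (div_mul_cancel₀ x ht.ne').symm
  have hu0 : 0 ≤ u := div_nonneg hx ht.le
  have hL : (L : ℝ) ≤ u := by rw [hu, le_div_iff₀ ht]; linarith
  have hL2 : u ≤ (L : ℝ) + 1 := by rw [hu, div_le_iff₀ ht]; linarith
  have key := poly_bound L u hu0 hL hL2
  have heq : ∑ i ∈ range (L + 1), (i : ℝ) * (x - i * t) - x ^ 3 / (6 * t ^ 2)
      = t * (u * (L * (L + 1) / 2) - L * (L + 1) * (2 * L + 1) / 6 - u ^ 3 / 6) := by
    rw [hs, hxu]; field_simp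
  rw [heq, abs_mul, abs_of_pos ht, hxu]
  calc t * |u * (L * (L + 1) / 2) - L * (L + 1) * (2 * L + 1) / 6 - u ^ 3 / 6|
      ≤ t * (2 * u) := by nlinarith
    _ = 2 * (u * t) := by ring

lemma log_term_le (p n i : ℕ) (hp : 1 < p) (hn : n ≠ 0) (hi : p ^ i ≤ n) :
    Real.log ((n / p ^ i + 1 : ℕ) : ℝ) ≤ Real.log 2 + Real.log n - i * Real.log p := by
  have hppos : 0 < p ^ i := Nat.pow_pos (by omega)
  have hdiv1 : 1 ≤ n / p ^ i := (Nat.one_le_div_iff hppos).2 hi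
  have h2 : ((n / p ^ i + 1 : ℕ) : ℝ) ≤ 2 * ((n : ℝ) / (p : ℝ) ^ i) := by
    have hnat : ((n / p ^ i + 1 : ℕ) : ℝ) ≤ 2 * ((n / p ^ i : ℕ) : ℝ) := by
      exact_mod_cast (by omega : n / p ^ i + 1 ≤ 2 * (n / p ^ i))
    refine hnat.trans ?_
    have hc := Nat.cast_div_le (α := ℝ) (m := n) (n := p ^ i)
    push_cast at hc
    linarith
  calc Real.log ((n / p ^ i + 1 : ℕ) : ℝ) ≤ Real.log (2 * ((n : ℝ) / (p : ℝ) ^ i)) := by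
        refine Real.log_le_log ?_ h2
        exact_mod_cast Nat.succ_pos _
    _ = Real.log 2 + Real.log n - i * Real.log p := by
        rw [Real.log_mul (by norm_num) (by positivity),
          Real.log_div (by exact_mod_cast hn) (by positivity), Real.log_pow]
        ring

lemma log_term_ge (p n i K : ℕ) (hp : 1 < p) (hn : n ≠ 0) (hK : 0 < K) :
    Real.log n - Real.log K - i * Real.log p ≤ Real.log ((n / (K * p ^ i) + 1 : ℕ) : ℝ) := by
  set d := K * p ^ i with hd
  have hdpos : 0 < d := Nat.mul_pos hK (Nat.pow_pos (by omega))
  have h1 : (n : ℝ) / (d : ℝ) ≤ ((n / d + 1 : ℕ) : ℝ) := by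
    rw [div_le_iff₀ (by exact_mod_cast hdpos)]
    have : n < (n / d + 1) * d := by
      calc n = d * (n / d) + n % d := (Nat.div_add_mod n d).symm
        _ < d * (n / d) + d := by have := Nat.mod_lt n hdpos; omega
        _ = (n / d + 1) * d := by ring
    exact_mod_cast this.le
  have h2 : Real.log ((n : ℝ) / (d : ℝ)) ≤ Real.log ((n / d + 1 : ℕ) : ℝ) := by
    refine Real.log_le_log ?_ h1
    have hn' : (0:ℕ) < n := Nat.pos_of_ne_zero hn
    exact div_pos (by exact_mod_cast hn') (by exact_mod_cast hdpos)
  refine le_trans (le_of_eq ?_) h2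
  rw [Real.log_div (by exact_mod_cast hn) (by exact_mod_cast hdpos.ne'), hd]
  push_cast
  rw [Real.log_mul (by exact_mod_cast hK.ne') (by positivity), Real.log_pow]
  ring

set_option maxHeartbeats 2000000 in
/-- `log (dim R_{≤n}) = (1/(6 (log p)^2)) (log n)^3 + O(log log n · (log n)^2)`. -/
theorem stmt6 (p : ℕ) (hp : p.Prime) : ∃ C : ℝ, ∀ n : ℕ, 2 ≤ n →
    |Real.log (polyCountMay p n) - (Real.log n) ^ 3 / (6 * (Real.log p) ^ 2)| ≤
      C * max 1 (Real.log (Real.log n) * (Real.log n) ^ 2) := by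
  refine ⟨2000, fun n hn => ?_⟩
  have hp1 : 1 < p := hp.one_lt
  have hn0 : n ≠ 0 := by omega
  set L := Nat.log p n with hLdef
  set x := Real.log n with hxdef
  set t := Real.log p with htdef
  set Lr := (L : ℝ) with hLr
  have ht0 : 0 < t := Real.log_pos (by exact_mod_cast hp1)
  have hlog2l : (0.6931471803:ℝ) < Real.log 2 := Real.log_two_gt_d9
  have hlog2u : Real.log 2 < 0.6931471808 := Real.log_two_lt_d9
  have hx2 : Real.log 2 ≤ x := Real.log_le_log (by norm_num) (by exact_mod_cast hn)
  have hx0 : 0 < x := by linarith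
  have ht2 : Real.log 2 ≤ t := Real.log_le_log (by norm_num) (by exact_mod_cast hp.two_le)
  have hLt : Lr * t ≤ x := by
    have h2 : ((p:ℝ)) ^ L ≤ (n:ℝ) := by exact_mod_cast Nat.pow_log_le_self p hn0
    have h3 := Real.log_le_log (by positivity) h2
    rwa [Real.log_pow] at h3
  have hxLt : x ≤ (Lr + 1) * t := by
    have h2 : (n:ℝ) ≤ (p:ℝ) ^ (L + 1) := by
      exact_mod_cast (Nat.lt_pow_succ_log_self hp1 n).le
    have h3 := Real.log_le_log (by exact_mod_cast Nat.pos_of_ne_zero hn0) h2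
    rwa [Real.log_pow, Nat.cast_add, Nat.cast_one] at h3
  have hup := count_le p n hp1 hn0
  have hlow := le_count p n hp1 hn0
  have hprodpos : 0 < ∏ i ∈ range (L + 1), (n / ((L + 1) ^ 2 * p ^ i) + 1) ^ i :=
    Finset.prod_pos fun i _ => Nat.pow_pos (Nat.succ_pos _)
  have hCpos : 0 < polyCountMay p n := lt_of_lt_of_le hprodpos hlow
  -- log of upper product
  have hlogup : Real.log (polyCountMay p n) ≤
      ∑ i ∈ range (L + 1), (i:ℝ) * (Real.log 2 + x - i * t) := by
    have hcast : ((∏ i ∈ range (L + 1), (n / p ^ i + 1) ^ i : ℕ) : ℝ) =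
        ∏ i ∈ range (L + 1), ((n / p ^ i + 1 : ℕ) : ℝ) ^ i := by push_cast; rfl
    calc Real.log (polyCountMay p n)
        ≤ Real.log ((∏ i ∈ range (L + 1), (n / p ^ i + 1) ^ i : ℕ) : ℝ) :=
          Real.log_le_log (by exact_mod_cast hCpos) (by exact_mod_cast hup)
      _ = ∑ i ∈ range (L + 1), (i:ℝ) * Real.log ((n / p ^ i + 1 : ℕ) : ℝ) := by
          rw [hcast, Real.log_prod]
          · exact Finset.sum_congr rfl fun i _ => by rw [Real.log_pow]
          · intro i _
            exact pow_ne_zero _ (by exact_mod_cast Nat.succ_ne_zero (n / p ^ i))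
      _ ≤ _ := by
          refine Finset.sum_le_sum fun i hi => ?_
          refine mul_le_mul_of_nonneg_left ?_ (Nat.cast_nonneg i)
          refine log_term_le p n i hp1 hn0 ?_
          have hiL : i ≤ L := Nat.lt_succ_iff.1 (mem_range.1 hi)
          exact le_trans (Nat.pow_le_pow_right (by omega) hiL) (Nat.pow_log_le_self p hn0)
  -- log of lower product
  have hloglow : ∑ i ∈ range (L + 1), (i:ℝ) * (x - Real.log (((L+1)^2 : ℕ) : ℝ) - i * t)
      ≤ Real.log (polyCountMay p n) := by
    have hcast : ((∏ i ∈ range (L + 1), (n / ((L+1)^2 * p ^ i) + 1) ^ i : ℕ) : ℝ) =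
        ∏ i ∈ range (L + 1), ((n / ((L+1)^2 * p ^ i) + 1 : ℕ) : ℝ) ^ i := by push_cast; rfl
    calc ∑ i ∈ range (L + 1), (i:ℝ) * (x - Real.log (((L+1)^2 : ℕ) : ℝ) - i * t)
        ≤ ∑ i ∈ range (L + 1), (i:ℝ) * Real.log ((n / ((L+1)^2 * p ^ i) + 1 : ℕ) : ℝ) := by
          refine Finset.sum_le_sum fun i _ => ?_
          refine mul_le_mul_of_nonneg_left ?_ (Nat.cast_nonneg i)
          exact log_term_ge p n i ((L+1)^2) hp1 hn0 (by positivity)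
      _ = Real.log ((∏ i ∈ range (L + 1), (n / ((L+1)^2 * p ^ i) + 1) ^ i : ℕ) : ℝ) := by
          rw [hcast, Real.log_prod]
          · exact (Finset.sum_congr rfl fun i _ => by rw [Real.log_pow]).symm
          · intro i _
            exact pow_ne_zero _ (by exact_mod_cast Nat.succ_ne_zero (n / ((L+1)^2 * p ^ i)))
      _ ≤ Real.log (polyCountMay p n) :=
          Real.log_le_log (by exact_mod_cast hprodpos) (by exact_mod_cast hlow)
  have hlogK : Real.log (((L+1)^2 : ℕ) : ℝ) = 2 * Real.log (Lr + 1) := by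
    push_cast
    rw [Real.log_pow]
    norm_num
    rfl
  have hS1 : ∑ i ∈ range (L + 1), (i:ℝ) * (Real.log 2 + x - i * t)
      = (∑ i ∈ range (L + 1), (i:ℝ) * (x - i * t)) + Real.log 2 * (Lr * (Lr + 1) / 2) := by
    rw [← sum_id_real L, Finset.mul_sum, ← Finset.sum_add_distrib]
    exact Finset.sum_congr rfl fun i _ => by ring
  have hS2 : ∑ i ∈ range (L + 1), (i:ℝ) * (x - Real.log (((L+1)^2 : ℕ) : ℝ) - i * t)
      = (∑ i ∈ range (L + 1), (i:ℝ) * (x - i * t))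
        - 2 * Real.log (Lr + 1) * (Lr * (Lr + 1) / 2) := by
    rw [← sum_id_real L, Finset.mul_sum, ← Finset.sum_sub_distrib]
    exact Finset.sum_congr rfl fun i _ => by rw [hlogK]; ring
  have hmain := main_est L t x ht0 hx0.le hLt hxLt
  rw [abs_le] at hmain
  have hLr0 : (0:ℝ) ≤ Lr := Nat.cast_nonneg L
  have hSig1 : Lr * (Lr + 1) / 2 ≤ (Lr + 1) ^ 2 := by nlinarith
  have hSig0 : (0:ℝ) ≤ Lr * (Lr + 1) / 2 := by positivity
  have hlogL1 : 0 ≤ Real.log (Lr + 1) := Real.log_nonneg (by linarith)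
  have b1 : Real.log 2 * (Lr * (Lr + 1) / 2) ≤ Real.log 2 * (Lr + 1) ^ 2 :=
    mul_le_mul_of_nonneg_left hSig1 (by linarith)
  have b2 : 2 * Real.log (Lr + 1) * (Lr * (Lr + 1) / 2) ≤
      2 * Real.log (Lr + 1) * (Lr + 1) ^ 2 :=
    mul_le_mul_of_nonneg_left hSig1 (by linarith)
  have hb3 : (0:ℝ) ≤ Real.log 2 * (Lr + 1) ^ 2 := by positivity
  have hb4 : (0:ℝ) ≤ 2 * Real.log (Lr + 1) * (Lr + 1) ^ 2 := by positivity
  have hb5 : (0:ℝ) ≤ Real.log 2 * (Lr * (Lr + 1) / 2) := by positivity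
  have hb6 : (0:ℝ) ≤ 2 * Real.log (Lr + 1) * (Lr * (Lr + 1) / 2) := by positivity
  rw [hS1] at hlogup
  rw [hS2] at hloglow
  have herr : |Real.log (polyCountMay p n) - x ^ 3 / (6 * t ^ 2)| ≤
      2 * x + Real.log 2 * (Lr + 1) ^ 2 + 2 * Real.log (Lr + 1) * (Lr + 1) ^ 2 := by
    rw [abs_le]
    constructor
    · linarith [hmain.1, hloglow, b2]
    · linarith [hmain.2, hlogup, b1]
  -- bound Lr + 1 by 4x
  have hL4x : Lr + 1 ≤ 4 * x := by
    have h1 : Lr ≤ x / t := (le_div_iff₀ ht0).2 hLt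
    have h2 : x / t ≤ x / Real.log 2 :=
      div_le_div_of_nonneg_left hx0.le (by linarith) ht2
    have h3 : x / Real.log 2 ≤ 2 * x := by
      rw [div_le_iff₀ (by linarith)]
      nlinarith
    have h4 : (1:ℝ) ≤ 2 * x := by nlinarith
    linarith
  have hloglog : Real.log (Lr + 1) ≤ Real.log 4 + Real.log x := by
    calc Real.log (Lr + 1) ≤ Real.log (4 * x) := Real.log_le_log (by linarith) hL4x
      _ = Real.log 4 + Real.log x := Real.log_mul (by norm_num) hx0.ne'
  have hsq : (Lr + 1) ^ 2 ≤ 16 * x ^ 2 := by nlinarith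
  have hsq0 : (0:ℝ) ≤ 16 * x ^ 2 := by positivity
  have herr2 : |Real.log (polyCountMay p n) - x ^ 3 / (6 * t ^ 2)| ≤
      2 * x + Real.log 2 * (16 * x ^ 2)
        + 2 * (Real.log 4 + Real.log x) * (16 * x ^ 2) := by
    refine herr.trans ?_
    have c1 : Real.log 2 * (Lr + 1) ^ 2 ≤ Real.log 2 * (16 * x ^ 2) :=
      mul_le_mul_of_nonneg_left hsq (by linarith)
    have c2 : 2 * Real.log (Lr + 1) * (Lr + 1) ^ 2 ≤
        2 * (Real.log 4 + Real.log x) * (16 * x ^ 2) := by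
      calc 2 * Real.log (Lr + 1) * (Lr + 1) ^ 2
          ≤ 2 * Real.log (Lr + 1) * (16 * x ^ 2) :=
            mul_le_mul_of_nonneg_left hsq (by linarith)
        _ ≤ 2 * (Real.log 4 + Real.log x) * (16 * x ^ 2) := by
            refine mul_le_mul_of_nonneg_right ?_ hsq0
            linarith
    linarith
  have hlog4 : Real.log 4 = 2 * Real.log 2 := by
    rw [show (4:ℝ) = 2 ^ (2:ℕ) by norm_num, Real.log_pow]
    norm_num
  have hmax1 : (1:ℝ) ≤ max 1 (Real.log x * x ^ 2) := le_max_left _ _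
  rcases le_or_gt x 3 with hx3 | hx3
  · -- small x
    have hlogxu : Real.log x ≤ 2 := by
      have := Real.log_le_sub_one_of_pos hx0
      linarith
    have hlogxl : -1 ≤ Real.log x := by
      have h5 : Real.log (1/2 : ℝ) ≤ Real.log x :=
        Real.log_le_log (by norm_num) (by linarith)
      rw [show (1/2 : ℝ) = 2⁻¹ by norm_num, Real.log_inv] at h5
      linarith
    have hx9 : x ^ 2 ≤ 9 := by nlinarith
    have hc0 : 0 ≤ Real.log 4 + Real.log x := by rw [hlog4]; linarith
    have hcu : Real.log 4 + Real.log x ≤ 3.4 := by rw [hlog4]; linarith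
    have h16u : 16 * x ^ 2 ≤ 144 := by linarith
    have m1 : (Real.log 4 + Real.log x) * (16 * x ^ 2) ≤ 3.4 * 144 :=
      mul_le_mul hcu h16u hsq0 (by norm_num)
    have m2 : Real.log 2 * (16 * x ^ 2) ≤ 0.7 * 144 :=
      mul_le_mul (by linarith) h16u hsq0 (by norm_num)
    calc |Real.log (polyCountMay p n) - x ^ 3 / (6 * t ^ 2)| ≤
        2 * x + Real.log 2 * (16 * x ^ 2) + 2 * (Real.log 4 + Real.log x) * (16 * x ^ 2) :=
          herr2
      _ ≤ 2000 := by linarith only [m1, m2, hx3]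
      _ ≤ 2000 * max 1 (Real.log x * x ^ 2) := by linarith only [hmax1]
  · -- large x
    have hlogx1 : 1 ≤ Real.log x := by
      rw [Real.le_log_iff_exp_le hx0]
      have := Real.exp_one_lt_d9
      linarith
    have hlog2x : Real.log 2 ≤ Real.log x := by linarith [hlog2u, hlogx1]
    have hyz0 : (0:ℝ) ≤ Real.log x * x ^ 2 := by positivity
    have hmaxr : Real.log x * x ^ 2 ≤ max 1 (Real.log x * x ^ 2) := le_max_right _ _
    have e1 : 2 * x ≤ 2 * (Real.log x * x ^ 2) := by nlinarith
    have e2 : Real.log 2 * (16 * x ^ 2) ≤ 16 * (Real.log x * x ^ 2) := by nlinarith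
    have e3 : 2 * (Real.log 4 + Real.log x) * (16 * x ^ 2) ≤ 80 * (Real.log x * x ^ 2) := by
      have h4x : Real.log 4 ≤ 1.4 * Real.log x := by
        rw [hlog4]; nlinarith
      nlinarith [sq_nonneg x]
    calc |Real.log (polyCountMay p n) - x ^ 3 / (6 * t ^ 2)| ≤
        2 * x + Real.log 2 * (16 * x ^ 2) + 2 * (Real.log 4 + Real.log x) * (16 * x ^ 2) :=
          herr2
      _ ≤ 98 * (Real.log x * x ^ 2) := by linarith only [e1, e2, e3]
      _ ≤ 2000 * max 1 (Real.log x * x ^ 2) := by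
          have h20 := mul_le_mul_of_nonneg_left hmaxr (by norm_num : (0:ℝ) ≤ 2000)
          linarith only [h20, hyz0]
end

section
/- Fix a prime p. For h ≥ 1, let R^h be the graded polynomial algebra with min(h, n−h+1) generators in degree p^n for each n (so generators occur in degrees p^h through p^{2h−1} and beyond, corresponding to a tensor product of algebras S^h ⊗ ... ⊗ S^{2h−1}, where S^k has one generator in each degree p^n for n ≥ k). Then log( max over h of dim R^h_{≤n} ) = ((9 + 4√2)/(294 (log p)^2)) (log n)^3 + O(log log n · (log n)^2). -/
open Finset

/-- The number of monomials of total degree at most `n` in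
`R^h = S^h ⊗ S^{h+1} ⊗ ... ⊗ S^{2h-1}`, where `S^k` is the polynomial algebra with one
generator in each degree `p^t` for `t ≥ k`.  Generators are indexed by pairs `(k, t)`
with `h ≤ k ≤ 2h - 1` and `k ≤ t`, the generator `(k, t)` having degree `p^t`. -/
noncomputable def polyCountMRS (p h n : ℕ) : ℕ :=
  Nat.card {a : ℕ × ℕ →₀ ℕ //
    (∀ q ∈ a.support, h ≤ q.1 ∧ q.1 ≤ 2 * h - 1 ∧ q.1 ≤ q.2) ∧
    (a.sum fun q m => m * p ^ q.2) ≤ n}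

def slotSet (p h n : ℕ) : Finset (ℕ × ℕ) :=
  (Finset.Icc h (min (2*h-1) (Nat.log p n))).biUnion
    (fun k => {k} ×ˢ Finset.Icc k (Nat.log p n))

lemma mem_slotSet {p h n : ℕ} {q : ℕ × ℕ} :
    q ∈ slotSet p h n ↔ h ≤ q.1 ∧ q.1 ≤ 2*h-1 ∧ q.1 ≤ q.2 ∧ q.2 ≤ Nat.log p n := by
  obtain ⟨k, t⟩ := q
  simp only [slotSet, mem_biUnion, mem_product, mem_singleton]
  constructor
  · rintro ⟨k', hk, hq1, hq2⟩
    simp only [mem_Icc] at hk hq2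
    omega
  · rintro ⟨h1, h2, h3, h4⟩
    exact ⟨k, by simp only [mem_Icc]; omega, rfl, by simp only [mem_Icc]; omega⟩

lemma slot_sum {p h n : ℕ} (w : ℕ → ℝ) :
    ∑ q ∈ slotSet p h n, w q.2 =
      ∑ k ∈ Finset.Icc h (min (2*h-1) (Nat.log p n)), ∑ t ∈ Finset.Icc k (Nat.log p n), w t := by
  rw [slotSet, Finset.sum_biUnion]
  · refine Finset.sum_congr rfl fun k _ => ?_
    rw [Finset.sum_product]
    simp
  · intro a _ b _ hab
    simp only [Finset.disjoint_left, mem_product, mem_singleton]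
    rintro ⟨k, t⟩ ⟨rfl, -⟩ ⟨h2, -⟩
    exact hab h2

lemma slotSet_subset {p h n : ℕ} :
    slotSet p h n ⊆ Finset.range (Nat.log p n + 1) ×ˢ Finset.range (Nat.log p n + 1) := by
  intro q hq
  rw [mem_slotSet] at hq
  simp only [mem_product, mem_range]
  omega

lemma slotSet_card {p h n : ℕ} : (slotSet p h n).card ≤ (Nat.log p n + 1)^2 := by
  calc (slotSet p h n).card ≤ _ := Finset.card_le_card slotSet_subset
  _ ≤ (Nat.log p n + 1)^2 := by rw [Finset.card_product, Finset.card_range]; ring_nf; exact le_refl _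

section counting
variable {p h n : ℕ}

abbrev MRSType (p h n : ℕ) := {a : ℕ × ℕ →₀ ℕ //
    (∀ q ∈ a.support, h ≤ q.1 ∧ q.1 ≤ 2 * h - 1 ∧ q.1 ≤ q.2) ∧
    (a.sum fun q m => m * p ^ q.2) ≤ n}

lemma single_le_deg (a : ℕ × ℕ →₀ ℕ) (q : ℕ × ℕ) :
    a q * p ^ q.2 ≤ a.sum fun q m => m * p ^ q.2 := by
  by_cases hq : q ∈ a.support
  · exact Finset.single_le_sum (f := fun q' => a q' * p ^ q'.2) (fun i _ => Nat.zero_le _) hq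
  · simp [Finsupp.notMem_support_iff.mp hq]

lemma mem_slotSet_of_ne (hp : 2 ≤ p) (hn : 1 ≤ n) (a : MRSType p h n) (q : ℕ × ℕ)
    (hq : a.1 q ≠ 0) : q ∈ slotSet p h n := by
  have hsupp : q ∈ a.1.support := Finsupp.mem_support_iff.2 hq
  obtain ⟨h1, h2, h3⟩ := a.2.1 q hsupp
  have hle : p ^ q.2 ≤ n := by
    calc p ^ q.2 ≤ a.1 q * p ^ q.2 := Nat.le_mul_of_pos_left _ (Nat.pos_of_ne_zero hq)
    _ ≤ _ := single_le_deg a.1 q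
    _ ≤ n := a.2.2
  exact mem_slotSet.2 ⟨h1, h2, h3, (Nat.le_log_iff_pow_le hp (by omega)).2 hle⟩

lemma MRS_nonempty : Nonempty (MRSType p h n) :=
  ⟨⟨0, by simp, by simp [Finsupp.sum_zero_index]⟩⟩

noncomputable def upperMap (p h n : ℕ) (hp : 2 ≤ p) : MRSType p h n →
    (∀ _q : {x // x ∈ slotSet p h n}, Fin (n + 1)) := fun a q => ⟨a.1 q.1, by
  have : a.1 q.1 ≤ n := by
    have h1 : a.1 q.1 * p ^ (q.1).2 ≤ n := le_trans (single_le_deg a.1 q.1) a.2.2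
    have h2 : 1 ≤ p ^ (q.1).2 := Nat.one_le_pow _ _ (by omega : 0 < p)
    calc a.1 q.1 = a.1 q.1 * 1 := by ring
    _ ≤ a.1 q.1 * p ^ (q.1).2 := Nat.mul_le_mul_left _ h2
    _ ≤ n := h1
  exact Nat.lt_succ_of_le this⟩

lemma upperMap_injective (hp : 2 ≤ p) (hn : 1 ≤ n) :
    Function.Injective (upperMap p h n hp) := by
  intro a b hab
  ext q
  by_cases hq : q ∈ slotSet p h n
  · have := congrFun hab ⟨q, hq⟩
    simpa [upperMap, Fin.mk.injEq] using this
  · have ha : a.1 q = 0 := by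
      by_contra hne; exact hq (mem_slotSet_of_ne hp hn a q hne)
    have hb : b.1 q = 0 := by
      by_contra hne; exact hq (mem_slotSet_of_ne hp hn b q hne)
    rw [ha, hb]

lemma MRS_finite (hp : 2 ≤ p) (hn : 1 ≤ n) : Finite (MRSType p h n) :=
  Finite.of_injective _ (upperMap_injective hp hn)

lemma card_upper (hp : 2 ≤ p) (hn : 1 ≤ n) :
    polyCountMRS p h n ≤ ∏ q ∈ slotSet p h n, (n / p ^ q.2 + 1) := by
  classical
  have key : polyCountMRS p h n ≤
      Nat.card (∀ q : {x // x ∈ slotSet p h n}, Fin (n / p ^ (q.1).2 + 1)) := by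
    refine Nat.card_le_card_of_injective
      (fun a q => (⟨a.1 q.1, ?_⟩ : Fin (n / p ^ (q.1).2 + 1))) ?_
    · have h1 : a.1 q.1 * p ^ (q.1).2 ≤ n := le_trans (single_le_deg a.1 q.1) a.2.2
      exact Nat.lt_succ_of_le ((Nat.le_div_iff_mul_le (k := p ^ (q.1).2) (by positivity)).2 h1)
    · intro a b hab
      ext q
      by_cases hq : q ∈ slotSet p h n
      · have := congrFun hab ⟨q, hq⟩
        simpa [Fin.mk.injEq] using this
      · have ha : a.1 q = 0 := by
          by_contra hne; exact hq (mem_slotSet_of_ne hp hn a q hne)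
        have hb : b.1 q = 0 := by
          by_contra hne; exact hq (mem_slotSet_of_ne hp hn b q hne)
      
        rw [ha, hb]
  calc polyCountMRS p h n ≤ _ := key
    _ = ∏ q : {x // x ∈ slotSet p h n}, (n / p ^ (q.1).2 + 1) := by
        rw [Nat.card_pi]
        simp only [Nat.card_eq_fintype_card, Fintype.card_fin]
    _ = ∏ q ∈ slotSet p h n, (n / p ^ q.2 + 1) := Finset.prod_coe_sort (slotSet p h n) (fun q => n / p ^ q.2 + 1)

end counting
lemma card_lower (hp : 2 ≤ p) (hn : 1 ≤ n) :
    (∏ q ∈ slotSet p h n, (n / ((slotSet p h n).card * p ^ q.2) + 1)) ≤ polyCountMRS p h n := by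
  classical
  haveI : Finite (MRSType p h n) := MRS_finite hp hn
  set S := slotSet p h n with hS
  set N := S.card with hN
  have key : Nat.card (∀ q : {x // x ∈ S}, Fin (n / (N * p ^ (q.1).2) + 1)) ≤
      Nat.card (MRSType p h n) := by
    refine Nat.card_le_card_of_injective (fun g => ⟨Finsupp.onFinset S
      (fun q => if hq : q ∈ S then (g ⟨q, hq⟩ : ℕ) else 0)
      (fun q hq => by by_contra hmem; simp [hmem] at hq), ?_, ?_⟩) ?_
    · intro q hq
      have hqS : q ∈ S := Finsupp.support_onFinset_subset hq
      have := mem_slotSet.1 hqS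
      exact ⟨this.1, this.2.1, this.2.2.1⟩
    · -- degree bound
      rw [Finsupp.sum]
      calc ∑ q ∈ _, _ ≤ ∑ q ∈ S, (Finsupp.onFinset S
            (fun q => if hq : q ∈ S then (g ⟨q, hq⟩ : ℕ) else 0) _) q * p ^ q.2 := by
            apply Finset.sum_le_sum_of_subset Finsupp.support_onFinset_subset
        _ ≤ ∑ _q ∈ S, n / N := by
            apply Finset.sum_le_sum
            intro q hq
            rw [Finsupp.onFinset_apply, dif_pos hq]
            have hb : (g ⟨q, hq⟩ : ℕ) ≤ n / (N * p ^ q.2) := Nat.lt_succ_iff.1 (g ⟨q, hq⟩).2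
            calc (g ⟨q, hq⟩ : ℕ) * p ^ q.2 ≤ n / (N * p ^ q.2) * p ^ q.2 :=
                  Nat.mul_le_mul_right _ hb
              _ = n / N / p ^ q.2 * p ^ q.2 := by rw [Nat.div_div_eq_div_mul]
              _ ≤ n / N := Nat.div_mul_le_self _ _
        _ ≤ N * (n / N) := by rw [Finset.sum_const, smul_eq_mul]
        _ ≤ n := Nat.mul_div_le n N
    · intro g₁ g₂ hg
      funext q
      have := congrArg (fun (a : MRSType p h n) => a.1 q.1) hg
      simp only [Finsupp.onFinset_apply, dif_pos q.2] at this
      exact Fin.ext this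
  calc (∏ q ∈ S, (n / (N * p ^ q.2) + 1))
      = ∏ q : {x // x ∈ S}, (n / (N * p ^ (q.1).2) + 1) :=
        (Finset.prod_coe_sort S (fun q => n / (N * p ^ q.2) + 1)).symm
    _ = Nat.card (∀ q : {x // x ∈ S}, Fin (n / (N * p ^ (q.1).2) + 1)) := by
        rw [Nat.card_pi]
        simp only [Nat.card_eq_fintype_card, Fintype.card_fin]
    _ ≤ Nat.card (MRSType p h n) := key
    _ = polyCountMRS p h n := rfl

lemma polyCountMRS_pos (hp : 2 ≤ p) (hn : 1 ≤ n) : 0 < polyCountMRS p h n := by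
  haveI : Finite (MRSType p h n) := MRS_finite hp hn
  haveI : Nonempty (MRSType p h n) := MRS_nonempty
  exact Nat.card_pos

/-! ### Sum formulas -/

lemma telesc (x : ℝ) (m : ℕ) :
    ∑ i ∈ Finset.range m, ((x - i)*(x + 1 - i)/2) =
      (x*(x+1)*(x+2) - (x-m)*(x-m+1)*(x-m+2))/6 := by
  induction m with
  | zero => simp
  | succ m ih =>
    rw [Finset.sum_range_succ, ih]
    push_cast
    ring

lemma sum_lin (x : ℝ) (m : ℕ) :
    ∑ i ∈ Finset.range m, (x - i) = m*x - m*(m-1)/2 := by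
  induction m with
  | zero => simp
  | succ m ih =>
    rw [Finset.sum_range_succ, ih]
    push_cast
    ring

lemma innerSumW (w : ℝ) {k L : ℕ} (hk : k ≤ L) :
    ∑ t ∈ Finset.Icc k L, ((L:ℝ) + w - t) =
      ((L:ℝ)-k)*((L:ℝ)+1-k)/2 + w*((L:ℝ)+1-k) := by
  have h1 : Finset.Icc k L = Finset.Ico k (L+1) := by rw [Finset.Ico_add_one_right_eq_Icc]
  rw [h1, Finset.sum_Ico_eq_sum_range]
  have h2 : ∀ i ∈ Finset.range (L+1-k), ((L:ℝ) + w - ((k+i : ℕ):ℝ)) = (((L:ℝ) + w - k) - i) := by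
    intro i _; push_cast; ring
  rw [Finset.sum_congr rfl h2, sum_lin]
  have h3 : ((L+1-k : ℕ) : ℝ) = (L:ℝ) + 1 - k := by
    rw [Nat.cast_sub (by omega)]; push_cast; ring
  rw [h3]
  ring

noncomputable def Epart (h L : ℕ) : ℝ :=
  ∑ k ∈ Finset.Icc h (min (2*h-1) L), ((L:ℝ)-k)*((L:ℝ)+1-k)/2

lemma Epart_closed_A {h L : ℕ} (hh : 1 ≤ h) (hA : 2*h-1 ≤ L) :
    Epart h L = (((L:ℝ)-h)*((L:ℝ)-h+1)*((L:ℝ)-h+2)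
      - ((L:ℝ)-2*h)*((L:ℝ)-2*h+1)*((L:ℝ)-2*h+2))/6 := by
  have hmin : min (2*h-1) L = 2*h-1 := min_eq_left hA
  rw [Epart, hmin]
  have h1 : Finset.Icc h (2*h-1) = Finset.Ico h (2*h-1+1) := by rw [Finset.Ico_add_one_right_eq_Icc]
  rw [h1, Finset.sum_Ico_eq_sum_range]
  have hsz : 2*h-1+1-h = h := by omega
  rw [hsz]
  have h2 : ∀ i ∈ Finset.range h, ((L:ℝ)-((h+i : ℕ):ℝ))*((L:ℝ)+1-((h+i : ℕ):ℝ))/2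
      = ((((L:ℝ)-h) - i)*(((L:ℝ)-h) + 1 - i)/2) := by
    intro i _; push_cast; ring
  rw [Finset.sum_congr rfl h2, telesc]
  push_cast
  ring

lemma Epart_closed_B {h L : ℕ} (hh : h ≤ L) (hB : L < 2*h-1) :
    Epart h L = ((L:ℝ)-h)*((L:ℝ)-h+1)*((L:ℝ)-h+2)/6 := by
  have hmin : min (2*h-1) L = L := min_eq_right (by omega)
  rw [Epart, hmin]
  have h1 : Finset.Icc h L = Finset.Ico h (L+1) := by rw [Finset.Ico_add_one_right_eq_Icc]
  rw [h1, Finset.sum_Ico_eq_sum_range]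
  have h2 : ∀ i ∈ Finset.range (L+1-h), ((L:ℝ)-((h+i : ℕ):ℝ))*((L:ℝ)+1-((h+i : ℕ):ℝ))/2
      = ((((L:ℝ)-h) - i)*(((L:ℝ)-h) + 1 - i)/2) := by
    intro i _; push_cast; ring
  rw [Finset.sum_congr rfl h2, telesc]
  have h3 : ((L+1-h : ℕ) : ℝ) = (L:ℝ) + 1 - h := by
    rw [Nat.cast_sub (by omega)]; push_cast; ring
  rw [h3]
  ring

lemma Epart_empty {h L : ℕ} (hh : L < h) : Epart h L = 0 := by
  rw [Epart, Finset.Icc_eq_empty (by omega : ¬ h ≤ min (2*h-1) L), Finset.sum_empty]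

/-! ### Polynomial inequalities with √2 -/

lemma key_id (s x l : ℝ) (hsq : s^2 = 2) :
    (9+4*s)*l^3 - (147*x*l^2 - 441*x^2*l + 343*x^3)
      = (7*x-(3-s)*l)^2*((3+2*s)*l-7*x) := by
  linear_combination (-2*s*l^3 - 21*x*l^2 + 9*l^3) * hsq

lemma polyA_ub (s x l : ℝ) (hsq : s^2 = 2) (hs : 1.4 ≤ s) (hx : 1 ≤ x) (hxl : 2*x ≤ l+1) :
    147*x*l^2 - 441*x^2*l + 343*x^3 ≤ (9+4*s)*l^3 + 500*(l+1)^2 := by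
  have hl1 : 1 ≤ l := by linarith
  rcases le_or_gt (7*x) ((3+2*s)*l) with hc | hc
  · have hid := key_id s x l hsq
    nlinarith [mul_nonneg (sq_nonneg (7*x-(3-s)*l)) (sub_nonneg.2 hc), sq_nonneg (l+1)]
  · have hl : l ≤ (1.6:ℝ) := by nlinarith
    have hxx : x ≤ 1.3 := by nlinarith
    have hx0 : (0:ℝ) ≤ x := by linarith
    have hx2 : x^2 ≤ 1.69 := by nlinarith
    have hx3 : x^3 ≤ 2.197 := by nlinarith
    have hl2 : l^2 ≤ 2.56 := by nlinarith
    have hm1 : 147*x*l^2 ≤ 147*1.3*2.56 := by nlinarith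
    have hm2 : (0:ℝ) ≤ 441*x^2*l := by positivity
    have hm3 : (0:ℝ) ≤ (9+4*s)*l^3 := by nlinarith
    have hm4 : (500:ℝ)*4 ≤ 500*(l+1)^2 := by nlinarith
    linarith

lemma polyB_ub (s m l : ℝ) (hsq : s^2 = 2) (hs : 1.4 ≤ s) (hm : 0 ≤ m) (hml : 2*m ≤ l) :
    49*m*(m+1)*(m+2) ≤ (9+4*s)*l^3 + 500*(l+1)^2 := by
  have hl : 0 ≤ l := by linarith
  nlinarith [mul_nonneg (mul_nonneg hm hm) (sub_nonneg.2 hml),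
    mul_nonneg hm (sub_nonneg.2 hml), sub_nonneg.2 hml, sq_nonneg (l - 2*m),
    mul_nonneg (mul_nonneg hl hl) hl, sq_nonneg l, sq_nonneg m]

lemma poly_lb (s x l : ℝ) (hsq : s^2 = 2) (hs14 : 1.4 ≤ s) (hs15 : s ≤ 1.5)
    (hl : 10 ≤ l) (hd1 : 0 < 7*x-(3-s)*l) (hd2 : 7*x-(3-s)*l ≤ 7) (hxl : x ≤ l) :
    (9+4*s)*l^3 - 1000*(l+1)^2 ≤
      147*x*l^2 - 441*x^2*l + 343*x^3 + 294*x*l - 441*x^2 + 98*x := by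
  have hx0 : 0 ≤ x := by nlinarith
  have hA2 : (7*x-(3-s)*l)^2 ≤ 49 := by nlinarith
  have hB0 : 0 ≤ (3+2*s)*l - 7*x := by nlinarith
  have hB6 : (3+2*s)*l - 7*x ≤ 6*l := by nlinarith
  have hAB : (7*x-(3-s)*l)^2*((3+2*s)*l-7*x) ≤ 49*(6*l) :=
    mul_le_mul hA2 hB6 hB0 (by norm_num)
  have hid := key_id s x l hsq
  nlinarith [mul_nonneg hx0 (by linarith : (0:ℝ) ≤ l), mul_self_le_mul_self hx0 hxl]

lemma Epart_nonneg (h L : ℕ) : 0 ≤ Epart h L := by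
  apply Finset.sum_nonneg
  intro k hk
  simp only [Finset.mem_Icc] at hk
  have hk1 : (k:ℝ) ≤ L := by
    have : k ≤ L := le_trans hk.2 (min_le_right _ _)
    exact_mod_cast this
  have : (0:ℝ) ≤ (L:ℝ) - k := by linarith
  nlinarith

lemma Epart_ub {h L : ℕ} (hh : 1 ≤ h) :
    294 * Epart h L ≤ (9+4*Real.sqrt 2)*(L:ℝ)^3 + 1000*((L:ℝ)+1)^2 := by
  set s := Real.sqrt 2 with hs
  have hsq : s^2 = 2 := Real.sq_sqrt (by norm_num)
  have hs14 : 1.4 ≤ s := by nlinarith [Real.sqrt_nonneg 2]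
  rcases le_or_gt h L with hhl | hhl
  · rcases le_or_gt (2*h-1) L with hA | hB
    · rw [Epart_closed_A hh hA]
      have hha : (1:ℝ) ≤ (h:ℝ) := by exact_mod_cast hh
      have hxl : 2*(h:ℝ) ≤ (L:ℝ)+1 := by
        have : 2*h ≤ L + 1 := by omega
        exact_mod_cast this
      have hhL : (h:ℝ) ≤ (L:ℝ) := by exact_mod_cast hhl
      have := polyA_ub s h L hsq hs14 hha hxl
      nlinarith [this, sq_nonneg ((L:ℝ) - h), mul_nonneg (by linarith : (0:ℝ) ≤ (h:ℝ)) (by linarith : (0:ℝ) ≤ (L:ℝ))]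
    · rw [Epart_closed_B hhl hB]
      have hm0 : (0:ℝ) ≤ (L:ℝ) - h := by
        have : (h:ℝ) ≤ L := by exact_mod_cast hhl
        linarith
      have hml : 2*((L:ℝ) - h) ≤ (L:ℝ) := by
        have : 2*L ≤ 2*h + L := by omega
        have h2 : (2*(L:ℕ) : ℝ) ≤ (2*h + L : ℕ) := by exact_mod_cast this
        push_cast at h2
        linarith
      have := polyB_ub s ((L:ℝ) - h) L hsq hs14 hm0 hml
      nlinarith [this, sq_nonneg ((L:ℝ)+1)]
  · rw [Epart_empty hhl]
    nlinarith [mul_nonneg (show (0:ℝ) ≤ 9+4*s by linarith) (show (0:ℝ) ≤ (L:ℝ)^3 by positivity),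
      sq_nonneg ((L:ℝ)+1)]

lemma Epart_lb {h L : ℕ} (hL : 40 ≤ L)
    (hlow : ((3-Real.sqrt 2)/7)*(L:ℝ) < h) (hhi : (h:ℝ) ≤ ((3-Real.sqrt 2)/7)*(L:ℝ) + 1) :
    (9+4*Real.sqrt 2)*(L:ℝ)^3 - 1000*((L:ℝ)+1)^2 ≤ 294 * Epart h L := by
  set s := Real.sqrt 2 with hs
  have hsq : s^2 = 2 := Real.sq_sqrt (by norm_num)
  have hs14 : 1.4 ≤ s := by nlinarith [Real.sqrt_nonneg 2]
  have hs15 : s ≤ 1.5 := by nlinarith [Real.sqrt_nonneg 2]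
  have hLr : (40:ℝ) ≤ (L:ℝ) := by exact_mod_cast hL
  -- basic consequences
  have hh1 : 1 ≤ h := by
    by_contra hc
    have : h = 0 := by omega
    rw [this] at hlow
    push_cast at hlow
    nlinarith
  have hhle : (h:ℝ) ≤ 0.23*(L:ℝ) + 1 := by nlinarith
  have h2hL : 2*h - 1 ≤ L := by
    have : 2*(h:ℝ) ≤ (L:ℝ) := by nlinarith
    have h2 : 2*h ≤ L := by exact_mod_cast this
    omega
  have hhL : (h:ℝ) ≤ (L:ℝ) := by nlinarith
  rw [Epart_closed_A hh1 h2hL]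
  have hd1 : 0 < 7*(h:ℝ) - (3-s)*(L:ℝ) := by nlinarith
  have hd2 : 7*(h:ℝ) - (3-s)*(L:ℝ) ≤ 7 := by nlinarith
  have := poly_lb s h L hsq hs14 hs15 (by linarith) hd1 hd2 hhL
  nlinarith [this]

/-! ### weighted slot sums -/

lemma slot_sum_weight {p h n : ℕ} (w : ℝ) :
    ∑ q ∈ slotSet p h n, ((Nat.log p n : ℝ) + w - q.2) =
      Epart h (Nat.log p n) +
        ∑ k ∈ Finset.Icc h (min (2*h-1) (Nat.log p n)), w*((Nat.log p n : ℝ)+1-k) := by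
  rw [slot_sum (fun t => (Nat.log p n : ℝ) + w - t), Epart, ← Finset.sum_add_distrib]
  refine Finset.sum_congr rfl fun k hk => ?_
  simp only [Finset.mem_Icc] at hk
  exact innerSumW w (le_trans hk.2 (min_le_right _ _))

lemma extra_sum_bounds {p h n : ℕ} (w : ℝ) (hw : 0 ≤ w) :
    0 ≤ ∑ k ∈ Finset.Icc h (min (2*h-1) (Nat.log p n)), w*((Nat.log p n : ℝ)+1-k) ∧
    ∑ k ∈ Finset.Icc h (min (2*h-1) (Nat.log p n)), w*((Nat.log p n : ℝ)+1-k)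
      ≤ w * ((Nat.log p n : ℝ)+1)^2 := by
  set L := Nat.log p n
  have hterm : ∀ k ∈ Finset.Icc h (min (2*h-1) L), (0:ℝ) ≤ w*((L:ℝ)+1-k) ∧
      w*((L:ℝ)+1-k) ≤ w*((L:ℝ)+1) := by
    intro k hk
    simp only [Finset.mem_Icc] at hk
    have hkL : k ≤ L := le_trans hk.2 (min_le_right _ _)
    have hkr : (k:ℝ) ≤ (L:ℝ) := by exact_mod_cast hkL
    have hk0 : (0:ℝ) ≤ (k:ℝ) := Nat.cast_nonneg k
    constructor
    · apply mul_nonneg hw; linarith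
    · apply mul_le_mul_of_nonneg_left (by linarith) hw
  constructor
  · exact Finset.sum_nonneg fun k hk => (hterm k hk).1
  · calc _ ≤ ∑ _k ∈ Finset.Icc h (min (2*h-1) L), w*((L:ℝ)+1) :=
        Finset.sum_le_sum fun k hk => (hterm k hk).2
    _ = (Finset.Icc h (min (2*h-1) L)).card * (w*((L:ℝ)+1)) := by
        rw [Finset.sum_const, nsmul_eq_mul]
    _ ≤ ((L:ℝ)+1) * (w*((L:ℝ)+1)) := by
        apply mul_le_mul_of_nonneg_right _ (mul_nonneg hw (by positivity))
        have hcard : (Finset.Icc h (min (2*h-1) L)).card ≤ L+1 := by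
          calc _ ≤ (Finset.range (L+1)).card := Finset.card_le_card (by
            intro k hk
            simp only [Finset.mem_Icc] at hk
            simp only [Finset.mem_range]
            omega)
          _ = L+1 := Finset.card_range _
        calc ((Finset.Icc h (min (2*h-1) L)).card : ℝ) ≤ ((L:ℕ)+1 : ℕ) := by exact_mod_cast hcard
          _ = (L:ℝ)+1 := by push_cast; ring
    _ = w * ((L:ℝ)+1)^2 := by ring

/-! ### log bounds -/

lemma log_count_ub {p h n : ℕ} (hp : 2 ≤ p) (hn : 1 ≤ n) :
    Real.log (polyCountMRS p h n) ≤
      Real.log p * (Epart h (Nat.log p n) + 3*((Nat.log p n : ℝ)+1)^2) := by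
  set L := Nat.log p n with hL
  have hppos : (0:ℝ) < (p:ℝ) := by positivity
  have hlogp : 0 ≤ Real.log p := Real.log_nonneg (by exact_mod_cast hp.trans' (by norm_num))
  have hcount : (0:ℝ) < (polyCountMRS p h n : ℝ) := by
    exact_mod_cast polyCountMRS_pos hp hn
  have step1 : Real.log (polyCountMRS p h n) ≤
      Real.log ((∏ q ∈ slotSet p h n, (n / p ^ q.2 + 1) : ℕ) : ℝ) := by
    apply Real.log_le_log hcount
    exact_mod_cast card_upper hp hn
  have step2 : Real.log ((∏ q ∈ slotSet p h n, (n / p ^ q.2 + 1) : ℕ) : ℝ) =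
      ∑ q ∈ slotSet p h n, Real.log ((n / p ^ q.2 + 1 : ℕ) : ℝ) := by
    rw [Nat.cast_prod]
    exact Real.log_prod (fun q _ => by positivity)
  have step3 : ∀ q ∈ slotSet p h n,
      Real.log ((n / p ^ q.2 + 1 : ℕ) : ℝ) ≤ ((L:ℝ) + 3 - q.2) * Real.log p := by
    intro q hq
    have ht : q.2 ≤ L := (mem_slotSet.1 hq).2.2.2
    have hpt : p ^ q.2 ≤ n := le_trans (Nat.pow_le_pow_right (by omega) ht)
      (Nat.pow_log_le_self p (by omega))
    have hdiv1 : 1 ≤ n / p ^ q.2 := by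
      rw [Nat.le_div_iff_mul_le (by positivity)]; omega
    have hcast : ((n / p ^ q.2 : ℕ) : ℝ) ≤ (n:ℝ) / (p:ℝ)^q.2 := by
      have := Nat.cast_div_le (α := ℝ) (m := n) (n := p ^ q.2)
      push_cast at this ⊢
      exact this
    have harg : ((n / p ^ q.2 + 1 : ℕ) : ℝ) ≤ 2*(n:ℝ) / (p:ℝ)^q.2 := by
      push_cast
      have h2 : ((n / p ^ q.2 : ℕ) : ℝ) + 1 ≤ 2*((n / p ^ q.2 : ℕ) : ℝ) := by
        have : (1:ℝ) ≤ ((n / p ^ q.2 : ℕ) : ℝ) := by exact_mod_cast hdiv1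
        linarith
      calc ((n / p ^ q.2 : ℕ) : ℝ) + 1 ≤ 2*((n / p ^ q.2 : ℕ) : ℝ) := h2
        _ ≤ 2*((n:ℝ) / (p:ℝ)^q.2) := by linarith
        _ = 2*(n:ℝ) / (p:ℝ)^q.2 := by ring
    have hposarg : (0:ℝ) < ((n / p ^ q.2 + 1 : ℕ) : ℝ) := by positivity
    calc Real.log ((n / p ^ q.2 + 1 : ℕ) : ℝ) ≤ Real.log (2*(n:ℝ) / (p:ℝ)^q.2) :=
          Real.log_le_log hposarg harg
      _ = Real.log 2 + Real.log n - q.2 * Real.log p := by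
          rw [Real.log_div (by positivity) (by positivity), Real.log_mul (by norm_num)
            (by positivity), Real.log_pow]
      _ ≤ ((L:ℝ) + 3 - q.2) * Real.log p := by
          have hlog2 : Real.log 2 ≤ Real.log p := Real.log_le_log (by norm_num)
            (by exact_mod_cast hp)
          have hlogn : Real.log n ≤ ((L:ℝ)+1) * Real.log p := by
            have hnlt : (n:ℝ) ≤ (p:ℝ)^(L+1) := by
              exact_mod_cast le_of_lt (Nat.lt_pow_succ_log_self (by omega : 1 < p) n)
            calc Real.log n ≤ Real.log ((p:ℝ)^(L+1)) :=
                Real.log_le_log (by exact_mod_cast hn.trans' (by norm_num) : (0:ℝ) < n) hnlt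
              _ = ((L:ℝ)+1) * Real.log p := by rw [Real.log_pow]; push_cast; ring
          have ht' : (q.2:ℝ) ≤ (L:ℝ) := by exact_mod_cast ht
          nlinarith [hlogp]
  have step4 : ∑ q ∈ slotSet p h n, Real.log ((n / p ^ q.2 + 1 : ℕ) : ℝ) ≤
      ∑ q ∈ slotSet p h n, ((L:ℝ) + 3 - q.2) * Real.log p :=
    Finset.sum_le_sum step3
  have step5 : ∑ q ∈ slotSet p h n, ((L:ℝ) + 3 - q.2) * Real.log p =
      (Epart h L + ∑ k ∈ Finset.Icc h (min (2*h-1) L), 3*((L:ℝ)+1-k)) * Real.log p := by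
    rw [← Finset.sum_mul, slot_sum_weight (p := p) (h := h) (n := n) 3]
  have hextra := extra_sum_bounds (p := p) (h := h) (n := n) 3 (by norm_num)
  calc Real.log (polyCountMRS p h n) ≤ _ := step1
    _ = _ := step2
    _ ≤ _ := step4
    _ = _ := step5
    _ ≤ (Epart h L + 3*((L:ℝ)+1)^2) * Real.log p := by
        apply mul_le_mul_of_nonneg_right _ hlogp
        linarith [hextra.2]
    _ = Real.log p * (Epart h L + 3*((L:ℝ)+1)^2) := by ring

lemma nat_div_real_lt {n m : ℕ} (hm : 0 < m) : (n:ℝ) / (m:ℝ) < ((n / m : ℕ) : ℝ) + 1 := by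
  rw [div_lt_iff₀ (by exact_mod_cast hm)]
  have h1 : n < (n / m + 1) * m := by
    have h2 : n % m < m := Nat.mod_lt _ hm
    have h3 : m * (n / m) + n % m = n := Nat.div_add_mod n m
    calc n = m * (n / m) + n % m := h3.symm
      _ < m * (n / m) + m := by omega
      _ = (n / m + 1) * m := by ring
  calc (n:ℝ) < (((n / m + 1) * m : ℕ) : ℝ) := by exact_mod_cast h1
    _ = (((n / m : ℕ):ℝ) + 1) * (m:ℝ) := by push_cast; ring

lemma log_count_lb {p h n : ℕ} (hp : 2 ≤ p) (hn : 1 ≤ n) (hh : 1 ≤ h)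
    (hhL : h ≤ Nat.log p n) :
    Real.log p * Epart h (Nat.log p n)
      - ((Nat.log p n : ℝ)+1)^2 * Real.log ((slotSet p h n).card) ≤
    Real.log (polyCountMRS p h n) := by
  classical
  set L := Nat.log p n with hLdef
  set N := (slotSet p h n).card with hNdef
  have hmem : (h, h) ∈ slotSet p h n := mem_slotSet.2 ⟨le_refl h, by omega, le_refl h, hhL⟩
  have hN1 : 1 ≤ N := Finset.card_pos.2 ⟨_, hmem⟩
  have hNr : (1:ℝ) ≤ (N:ℝ) := by exact_mod_cast hN1
  have hlogp : 0 ≤ Real.log p := Real.log_nonneg (by exact_mod_cast hp.trans' (by norm_num))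
  have hlogN : 0 ≤ Real.log N := Real.log_nonneg hNr
  have hNle : N ≤ (L+1)^2 := slotSet_card
  -- step 1 : log count ≥ log prod
  have hprodpos : (0:ℝ) < ((∏ q ∈ slotSet p h n, (n / (N * p ^ q.2) + 1) : ℕ) : ℝ) := by
    rw [Nat.cast_prod]
    apply Finset.prod_pos
    intro q _
    positivity
  have step1 : Real.log ((∏ q ∈ slotSet p h n, (n / (N * p ^ q.2) + 1) : ℕ) : ℝ) ≤
      Real.log (polyCountMRS p h n) := by
    apply Real.log_le_log hprodpos
    exact_mod_cast card_lower hp hn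
  have step2 : Real.log ((∏ q ∈ slotSet p h n, (n / (N * p ^ q.2) + 1) : ℕ) : ℝ) =
      ∑ q ∈ slotSet p h n, Real.log ((n / (N * p ^ q.2) + 1 : ℕ) : ℝ) := by
    rw [Nat.cast_prod]
    exact Real.log_prod (fun q _ => by positivity)
  have step3 : ∀ q ∈ slotSet p h n,
      ((L:ℝ) - q.2) * Real.log p - Real.log N ≤
        Real.log ((n / (N * p ^ q.2) + 1 : ℕ) : ℝ) := by
    intro q hq
    have harg : (n:ℝ) / ((N:ℝ) * (p:ℝ)^q.2) ≤ ((n / (N * p ^ q.2) + 1 : ℕ) : ℝ) := by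
      have := nat_div_real_lt (n := n) (m := N * p ^ q.2) (by positivity)
      push_cast at this ⊢
      linarith
    have hargpos : (0:ℝ) < (n:ℝ) / ((N:ℝ) * (p:ℝ)^q.2) := by
      apply div_pos
      · exact_mod_cast hn.trans' (by norm_num)
      · positivity
    calc ((L:ℝ) - q.2) * Real.log p - Real.log N ≤
          Real.log ((n:ℝ) / ((N:ℝ) * (p:ℝ)^q.2)) := by
          rw [Real.log_div (by positivity) (by positivity),
            Real.log_mul (by positivity) (by positivity), Real.log_pow]
          have hlogn : ((L:ℝ)) * Real.log p ≤ Real.log n := by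
            have hple : (p:ℝ)^L ≤ (n:ℝ) := by
              exact_mod_cast Nat.pow_log_le_self p (by omega : n ≠ 0)
            calc ((L:ℝ)) * Real.log p = Real.log ((p:ℝ)^L) := by rw [Real.log_pow]
              _ ≤ Real.log n := Real.log_le_log (by positivity) hple
          push_cast
          linarith
      _ ≤ Real.log ((n / (N * p ^ q.2) + 1 : ℕ) : ℝ) := Real.log_le_log hargpos harg
  have step4 : ∑ q ∈ slotSet p h n, (((L:ℝ) - q.2) * Real.log p - Real.log N) ≤
      ∑ q ∈ slotSet p h n, Real.log ((n / (N * p ^ q.2) + 1 : ℕ) : ℝ) :=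
    Finset.sum_le_sum step3
  have step5 : ∑ q ∈ slotSet p h n, (((L:ℝ) - q.2) * Real.log p - Real.log N) =
      Epart h L * Real.log p - (N:ℝ) * Real.log N := by
    rw [Finset.sum_sub_distrib, ← Finset.sum_mul, Finset.sum_const, nsmul_eq_mul]
    have h0 : ∑ q ∈ slotSet p h n, ((L:ℝ) - q.2) = Epart h L := by
      have h0' := slot_sum_weight (p := p) (h := h) (n := n) 0
      simpa using h0'
    rw [h0]
  have hNlog : (N:ℝ) * Real.log N ≤ ((L:ℝ)+1)^2 * Real.log N := by
    apply mul_le_mul_of_nonneg_right _ hlogN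
    calc (N:ℝ) ≤ (((L+1)^2 : ℕ) : ℝ) := by exact_mod_cast hNle
      _ = ((L:ℝ)+1)^2 := by push_cast; ring
  calc Real.log p * Epart h L - ((L:ℝ)+1)^2 * Real.log N
      ≤ Epart h L * Real.log p - (N:ℝ) * Real.log N := by linarith
    _ = _ := step5.symm
    _ ≤ _ := step4
    _ = _ := step2.symm
    _ ≤ _ := step1

/-! ### final glue -/

lemma log16_le {n : ℕ} (hn : 16 ≤ n) : (2.772:ℝ) ≤ Real.log n := by
  have h1 : (16:ℝ) ≤ (n:ℝ) := by exact_mod_cast hn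
  have h2 : Real.log 16 ≤ Real.log n := Real.log_le_log (by norm_num) h1
  have h3 : Real.log 16 = 4 * Real.log 2 := by
    rw [show (16:ℝ) = 2^4 by norm_num, Real.log_pow]
    push_cast; ring
  have := Real.log_two_gt_d9
  linarith

lemma one_le_loglog {n : ℕ} (hn : 16 ≤ n) : 1 ≤ Real.log (Real.log n) := by
  have h1 := log16_le hn
  rw [Real.le_log_iff_exp_le (by linarith)]
  have := Real.exp_one_lt_d9
  linarith


-- pure real-arithmetic glue lemmas (small contexts for nlinarith)
lemma conv_main (s lp Ln Lr : ℝ) (hs0 : 0 ≤ s) (hlp : 0 < lp) (hL0 : 0 ≤ Lr)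
    (hF1 : Lr*lp ≤ Ln) :
    (9+4*s)/294 * Lr^3 * lp ≤ (9+4*s)/(294*lp^2) * Ln^3 := by
  have hcube : (Lr*lp)^3 ≤ Ln^3 := pow_le_pow_left₀ (mul_nonneg hL0 hlp.le) hF1 3
  rw [div_mul_eq_mul_div (9+4*s) (294*lp^2) (Ln^3),
    le_div_iff₀ (by positivity : (0:ℝ) < 294*lp^2)]
  nlinarith [mul_le_mul_of_nonneg_left hcube (show (0:ℝ) ≤ 9+4*s by linarith)]

lemma conv_err (lp Ln Lr : ℝ) (hlp : 0.6931 ≤ lp) (hLn : 0.6931 ≤ Ln) (hL0 : 0 ≤ Lr)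
    (hF1 : Lr*lp ≤ Ln) :
    (Lr+1)^2*lp ≤ 3.05*(1+lp)^2*Ln^2 := by
  have hlp0 : (0:ℝ) < lp := by linarith
  have hk1 : (Lr+1)*lp ≤ 1.45*(1+lp)*Ln := by nlinarith
  have h0 : (0:ℝ) ≤ (Lr+1)*lp := by positivity
  have hk2 : (Lr+1)^2*lp^2 ≤ 2.1025*(1+lp)^2*Ln^2 := by
    nlinarith [mul_self_le_mul_self h0 hk1]
  have hpos : (0:ℝ) ≤ (1+lp)^2*Ln^2 := by positivity
  have hX : (0:ℝ) ≤ (Lr+1)^2*lp := by positivity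
  have hprod : (0:ℝ) ≤ ((Lr+1)^2*lp)*(lp - 0.6931) := mul_nonneg hX (by linarith)
  nlinarith [hk2, hprod, hpos]

lemma glue_ub_core (s lp Ln Lr E : ℝ) (hsq : s^2 = 2) (hs14 : 1.4 ≤ s)
    (hlp : 0.6931 ≤ lp) (hLn : 0.6931 ≤ Ln) (hL0 : 0 ≤ Lr) (hF1 : Lr*lp ≤ Ln)
    (hE : 294*E ≤ (9+4*s)*Lr^3 + 1000*(Lr+1)^2) :
    lp*(E + 3*(Lr+1)^2) ≤ (9+4*s)/(294*lp^2)*Ln^3 + 20*(1+lp)^2*Ln^2 := by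
  have hlp0 : (0:ℝ) < lp := by linarith
  have hmain := conv_main s lp Ln Lr (by linarith) hlp0 hL0 hF1
  have hk3 := conv_err lp Ln Lr hlp hLn hL0 hF1
  have h2 : E + 3*(Lr+1)^2 ≤ (9+4*s)/294 * Lr^3 + (1000/294+3)*(Lr+1)^2 := by linarith
  have h2' := mul_le_mul_of_nonneg_left h2 hlp0.le
  have hnn : (0:ℝ) ≤ (Lr+1)^2*lp := by positivity
  have h3 : (1000/294+3)*((Lr+1)^2*lp) ≤ 6.41*(3.05*(1+lp)^2*Ln^2) := by
    calc (1000/294+3)*((Lr+1)^2*lp) ≤ 6.41*((Lr+1)^2*lp) := by nlinarith [hnn]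
      _ ≤ 6.41*(3.05*(1+lp)^2*Ln^2) := by linarith
  have h4 : 6.41*(3.05*(1+lp)^2*Ln^2) ≤ 20*(1+lp)^2*Ln^2 := by
    nlinarith [mul_nonneg (sq_nonneg (1+lp)) (sq_nonneg Ln)]
  nlinarith [h2', h3, h4, hmain]

lemma glue_ub_small (s lp E Lr : ℝ) (hs14 : 1.4 ≤ s) (hs15 : s ≤ 1.5)
    (hlp0 : 0 < lp) (hL0 : 0 ≤ Lr) (hL3 : Lr ≤ 3)
    (hE : 294*E ≤ (9+4*s)*Lr^3 + 1000*(Lr+1)^2) :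
    lp*(E + 3*(Lr+1)^2) ≤ 104*lp := by
  have hc1 : Lr^3 ≤ 27 := by nlinarith
  have hc2 : (Lr+1)^2 ≤ 16 := by nlinarith
  have hc3 : (9+4*s)*Lr^3 ≤ 15*27 := by nlinarith [hc1, pow_nonneg hL0 3]
  have h3 : E + 3*(Lr+1)^2 ≤ 104 := by linarith
  calc lp*(E + 3*(Lr+1)^2) ≤ lp*104 := mul_le_mul_of_nonneg_left h3 hlp0.le
    _ = 104*lp := by ring

lemma glue_max (lp Ln M : ℝ) (h1p : 0 ≤ lp) (hll : 1 ≤ Real.log Ln)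
    (hM : Real.log Ln * Ln^2 ≤ M) :
    20*(1+lp)^2*Ln^2 ≤ 10^6*(1+lp)^3*M := by
  have ha : 20*(1+lp)^2 ≤ 10^6*(1+lp)^3 := by nlinarith
  have hb : Ln^2 ≤ Real.log Ln * Ln^2 := by nlinarith [sq_nonneg Ln]
  calc 20*(1+lp)^2*Ln^2 ≤ (10^6*(1+lp)^3)*Ln^2 :=
        mul_le_mul_of_nonneg_right ha (sq_nonneg Ln)
    _ ≤ (10^6*(1+lp)^3)*(Real.log Ln * Ln^2) := mul_le_mul_of_nonneg_left hb (by positivity)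
    _ ≤ 10^6*(1+lp)^3*M := mul_le_mul_of_nonneg_left hM (by positivity)

set_option maxHeartbeats 2000000 in
lemma final_ub (p n : ℕ) (hp : 2 ≤ p) (hn : 2 ≤ n) (h : ℕ) (hh : 1 ≤ h) :
    Real.log (polyCountMRS p h n) ≤
      (9 + 4 * Real.sqrt 2) / (294 * (Real.log p) ^ 2) * (Real.log n) ^ 3 +
        (10^6*(1+Real.log p)^3) * max 1 (Real.log (Real.log n) * (Real.log n) ^ 2) := by
  have hsq : (Real.sqrt 2)^2 = 2 := Real.sq_sqrt (by norm_num)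
  have hs14 : 1.4 ≤ Real.sqrt 2 := by nlinarith [Real.sqrt_nonneg 2]
  have hs15 : Real.sqrt 2 ≤ 1.5 := by nlinarith [Real.sqrt_nonneg 2]
  have hlog2 : (0.6931:ℝ) < Real.log 2 := by have := Real.log_two_gt_d9; linarith
  have hlp2 : Real.log 2 ≤ Real.log p := Real.log_le_log (by norm_num) (by exact_mod_cast hp)
  have hlp0 : (0:ℝ) < Real.log p := by linarith
  have hLn2 : Real.log 2 ≤ Real.log n := Real.log_le_log (by norm_num) (by exact_mod_cast hn)
  have hLn0 : (0:ℝ) < Real.log n := by linarith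
  have hF1 : ((Nat.log p n : ℕ):ℝ)*Real.log p ≤ Real.log n := by
    have hple : (p:ℝ)^(Nat.log p n) ≤ (n:ℝ) := by
      exact_mod_cast Nat.pow_log_le_self p (by omega : n ≠ 0)
    calc ((Nat.log p n : ℕ):ℝ)*Real.log p = Real.log ((p:ℝ)^(Nat.log p n)) := by
          rw [Real.log_pow]
      _ ≤ Real.log n := Real.log_le_log (by positivity) hple
  have hL0 : (0:ℝ) ≤ ((Nat.log p n : ℕ):ℝ) := Nat.cast_nonneg _
  have hstep := log_count_ub (p := p) (h := h) (n := n) hp (by omega)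
  have hE := Epart_ub (h := h) (L := Nat.log p n) hh
  have hmax1 : (1:ℝ) ≤ max 1 (Real.log (Real.log n) * (Real.log n)^2) := le_max_left _ _
  have hCpos : (0:ℝ) ≤ 10^6*(1+Real.log p)^3 := by positivity
  rcases le_or_gt 16 n with h16 | h16
  · have hll := one_le_loglog h16
    have hcore := glue_ub_core (Real.sqrt 2) (Real.log p) (Real.log n)
      ((Nat.log p n : ℕ):ℝ) (Epart h (Nat.log p n)) hsq hs14 (by linarith) (by linarith)
      hL0 hF1 hE
    have hmax := glue_max (Real.log p) (Real.log n)
      (max 1 (Real.log (Real.log n) * (Real.log n)^2)) hlp0.le hll (le_max_right _ _)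
    linarith
  · have hL3 : Nat.log p n ≤ 3 := by
      by_contra hc
      have h4 : 4 ≤ Nat.log p n := by omega
      have h5 : p^4 ≤ p^(Nat.log p n) := Nat.pow_le_pow_right (by omega) h4
      have h6 : p^(Nat.log p n) ≤ n := Nat.pow_log_le_self p (by omega)
      have h7 : (16:ℕ) ≤ p^4 := by
        calc (16:ℕ) = 2^4 := by norm_num
          _ ≤ p^4 := Nat.pow_le_pow_left hp 4
      omega
    have hLr : ((Nat.log p n : ℕ):ℝ) ≤ 3 := by exact_mod_cast hL3
    have hmain0 : (0:ℝ) ≤ (9+4*Real.sqrt 2)/(294*(Real.log p)^2) * (Real.log n)^3 := by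
      positivity
    have hsmall := glue_ub_small (Real.sqrt 2) (Real.log p) (Epart h (Nat.log p n))
      ((Nat.log p n : ℕ):ℝ) hs14 hs15 hlp0 hL0 hLr hE
    have hCbig : 104*Real.log p ≤
        (10^6*(1+Real.log p)^3) * max 1 (Real.log (Real.log n) * (Real.log n)^2) := by
      have h1 : 104*Real.log p ≤ 10^6*(1+Real.log p)^3 := by nlinarith [hlp0]
      calc 104*Real.log p ≤ 10^6*(1+Real.log p)^3 := h1
        _ = (10^6*(1+Real.log p)^3)*1 := by ring
        _ ≤ _ := mul_le_mul_of_nonneg_left hmax1 hCpos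
    linarith

set_option maxHeartbeats 2000000 in
lemma glue_lb_core (s lp Ln Lr E lN : ℝ) (hsq : s^2 = 2) (hs14 : 1.4 ≤ s) (hs15 : s ≤ 1.5)
    (hlp : 0.6931 ≤ lp) (hLr : 40 ≤ Lr) (hF1 : Lr*lp ≤ Ln) (hF2 : Ln ≤ (Lr+1)*lp)
    (hE : (9+4*s)*Lr^3 - 1000*(Lr+1)^2 ≤ 294*E)
    (hll : 1 ≤ Real.log Ln) (hlN0 : 0 ≤ lN) (hlN : lN ≤ 3*Real.log Ln) :
    (9+4*s)/(294*lp^2)*Ln^3 - 10^6*(1+lp)^3*(Real.log Ln*Ln^2) ≤ lp*E - (Lr+1)^2*lN := by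
  have hlp0 : (0:ℝ) < lp := by linarith
  have hL0 : (0:ℝ) ≤ Lr := by linarith
  have hLn27 : (27:ℝ) ≤ Ln := by
    have t2 : 0.6931*Lr ≤ lp*Lr := mul_le_mul_of_nonneg_right hlp hL0
    nlinarith [hF1, t2]
  have hLn0 : (0:ℝ) < Ln := by linarith
  have h9 : (0:ℝ) ≤ 9+4*s := by linarith
  -- main term conversion
  have hcube : Ln^3 ≤ ((Lr+1)*lp)^3 := pow_le_pow_left₀ hLn0.le hF2 3
  have ha2 : (9+4*s)/(294*lp^2)*Ln^3 ≤ (9+4*s)/294*((Lr+1)^3*lp) := by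
    rw [div_mul_eq_mul_div (9+4*s) (294*lp^2) (Ln^3),
      div_mul_eq_mul_div (9+4*s) 294 ((Lr+1)^3*lp),
      div_le_div_iff₀ (by positivity) (by norm_num)]
    have := mul_le_mul_of_nonneg_left hcube h9
    nlinarith [this]
  have ha3 : (Lr+1)^3 ≤ Lr^3 + 7*(Lr+1)^2 := by nlinarith
  have hclp : (0:ℝ) ≤ (9+4*s)/294*lp := by positivity
  have ha4 : (9+4*s)/294*((Lr+1)^3*lp) ≤
      (9+4*s)/294*(Lr^3*lp) + 0.36*((Lr+1)^2*lp) := by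
    have h1 := mul_le_mul_of_nonneg_left ha3 hclp
    have hXlp : (0:ℝ) ≤ (Lr+1)^2*lp := by positivity
    have h2 : s*((Lr+1)^2*lp) ≤ 1.5*((Lr+1)^2*lp) := mul_le_mul_of_nonneg_right hs15 hXlp
    linarith [h1, h2, hXlp]
  -- lower bound on lp*E
  have hb : (9+4*s)/294*(Lr^3*lp) - (1000/294)*((Lr+1)^2*lp) ≤ lp*E := by
    have h1 := mul_le_mul_of_nonneg_left hE (show (0:ℝ) ≤ lp/294 by positivity)
    linarith [h1]
  -- log N term
  have hc : (Lr+1)^2*lN ≤ (Lr+1)^2*(3*Real.log Ln) :=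
    mul_le_mul_of_nonneg_left hlN (sq_nonneg _)
  -- error budget
  have hd1 : (Lr+1)^2*lp ≤ 3.05*(1+lp)^2*Ln^2 := conv_err lp Ln Lr hlp (by linarith) hL0 hF1
  have hd2 : (Lr+1)^2 ≤ 4.41*(1+lp)^2*Ln^2 := by
    have hX : (0:ℝ) ≤ (Lr+1)^2 := sq_nonneg _
    have hprod : (0:ℝ) ≤ (Lr+1)^2*(lp - 0.6931) := mul_nonneg hX (by linarith)
    linarith [hd1, hprod, mul_nonneg (sq_nonneg (1+lp)) (sq_nonneg Ln)]
  have hQ : (0:ℝ) ≤ (1+lp)^2*Ln^2 := by positivity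
  have he1 : (0.36 + 1000/294)*((Lr+1)^2*lp) ≤ 3.77*(3.05*(1+lp)^2*Ln^2) := by
    have hnn : (0:ℝ) ≤ (Lr+1)^2*lp := by positivity
    calc (0.36 + 1000/294)*((Lr+1)^2*lp) ≤ 3.77*((Lr+1)^2*lp) := by nlinarith [hnn]
      _ ≤ 3.77*(3.05*(1+lp)^2*Ln^2) := by linarith
  have he2 : (Lr+1)^2*(3*Real.log Ln) ≤ (4.41*(1+lp)^2*Ln^2)*(3*Real.log Ln) :=
    mul_le_mul_of_nonneg_right hd2 (by linarith)
  have he3 : 3.77*(3.05*(1+lp)^2*Ln^2) ≤ 11.5*((1+lp)^2*Ln^2)*(Real.log Ln) := by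
    linarith [hQ, mul_nonneg hQ (by linarith : (0:ℝ) ≤ Real.log Ln - 1)]
  have he4 : (4.41*(1+lp)^2*Ln^2)*(3*Real.log Ln) ≤ 13.3*((1+lp)^2*Ln^2)*(Real.log Ln) := by
    linarith [mul_nonneg hQ (by linarith : (0:ℝ) ≤ Real.log Ln)]
  have he5 : 11.5*((1+lp)^2*Ln^2)*(Real.log Ln) + 13.3*((1+lp)^2*Ln^2)*(Real.log Ln) ≤
      10^6*(1+lp)^3*(Real.log Ln*Ln^2) := by
    have h1lp : (1:ℝ) ≤ 1+lp := by linarith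
    have hfac : (0:ℝ) ≤ Ln^2*Real.log Ln := mul_nonneg (sq_nonneg _) (by linarith)
    have hk := mul_le_mul_of_nonneg_right
      (show 24.8*(1+lp)^2 ≤ 10^6*(1+lp)^3 by nlinarith [h1lp]) hfac
    linarith [hk]
  linarith

set_option maxHeartbeats 2000000 in
lemma final_lb (p n : ℕ) (hp : 2 ≤ p) (hn : 2 ≤ n) :
    ∃ h : ℕ, 1 ≤ h ∧
      (9 + 4 * Real.sqrt 2) / (294 * (Real.log p) ^ 2) * (Real.log n) ^ 3 -
          (10^6*(1+Real.log p)^3) * max 1 (Real.log (Real.log n) * (Real.log n) ^ 2) ≤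
        Real.log (polyCountMRS p (h : ℕ) n) := by
  have hsq : (Real.sqrt 2)^2 = 2 := Real.sq_sqrt (by norm_num)
  have hs14 : 1.4 ≤ Real.sqrt 2 := by nlinarith [Real.sqrt_nonneg 2]
  have hs15 : Real.sqrt 2 ≤ 1.5 := by nlinarith [Real.sqrt_nonneg 2]
  have hlog2 : (0.6931:ℝ) < Real.log 2 := by have := Real.log_two_gt_d9; linarith
  have hlp2 : Real.log 2 ≤ Real.log p := Real.log_le_log (by norm_num) (by exact_mod_cast hp)
  have hlp0 : (0:ℝ) < Real.log p := by linarith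
  have hLn2 : Real.log 2 ≤ Real.log n := Real.log_le_log (by norm_num) (by exact_mod_cast hn)
  have hLn0 : (0:ℝ) < Real.log n := by linarith
  have hmax1 : (1:ℝ) ≤ max 1 (Real.log (Real.log n) * (Real.log n)^2) := le_max_left _ _
  have hCpos : (0:ℝ) ≤ 10^6*(1+Real.log p)^3 := by positivity
  rcases lt_or_ge n (p^40) with hsm | hbig
  · -- small case : h = 1
    refine ⟨1, le_refl 1, ?_⟩
    have hcnt : (0:ℝ) ≤ Real.log (polyCountMRS p 1 n) := by
      apply Real.log_nonneg
      have := polyCountMRS_pos (p := p) (h := 1) (n := n) hp (by omega)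
      exact_mod_cast this
    have hLn40 : Real.log n ≤ 40*Real.log p := by
      have h1 : (n:ℝ) ≤ (p:ℝ)^40 := by exact_mod_cast hsm.le
      calc Real.log n ≤ Real.log ((p:ℝ)^40) := Real.log_le_log (by positivity) h1
        _ = 40*Real.log p := by rw [Real.log_pow]; push_cast; ring
    have hmainC : (9+4*Real.sqrt 2)/(294*(Real.log p)^2)*(Real.log n)^3 ≤
        10^6*(1+Real.log p)^3 := by
      rw [div_mul_eq_mul_div (9+4*Real.sqrt 2) (294*(Real.log p)^2) ((Real.log n)^3),
        div_le_iff₀ (by positivity : (0:ℝ) < 294*(Real.log p)^2)]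
      have hcube : (Real.log n)^3 ≤ (40*Real.log p)^3 := pow_le_pow_left₀ hLn0.le hLn40 3
      nlinarith [mul_le_mul_of_nonneg_left hcube (show (0:ℝ) ≤ 9+4*Real.sqrt 2 by linarith),
        hlp0, sq_nonneg (Real.log p), mul_pos hlp0 hlp0,
        mul_pos (mul_pos hlp0 hlp0) hlp0]
    have : (9+4*Real.sqrt 2)/(294*(Real.log p)^2)*(Real.log n)^3 ≤
        (10^6*(1+Real.log p)^3) * max 1 (Real.log (Real.log n) * (Real.log n)^2) := by
      calc (9+4*Real.sqrt 2)/(294*(Real.log p)^2)*(Real.log n)^3 ≤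
          10^6*(1+Real.log p)^3 := hmainC
        _ = (10^6*(1+Real.log p)^3)*1 := by ring
        _ ≤ _ := mul_le_mul_of_nonneg_left hmax1 hCpos
    linarith
  · -- large case
    have hL40 : 40 ≤ Nat.log p n := (Nat.le_log_iff_pow_le (by omega) (by omega)).2 hbig
    have hL40r : (40:ℝ) ≤ ((Nat.log p n : ℕ):ℝ) := by exact_mod_cast hL40
    set L := Nat.log p n with hLdef
    set x := (3-Real.sqrt 2)/7*((L:ℕ):ℝ) with hxdef
    have hx0 : 0 ≤ x := by
      apply mul_nonneg _ (Nat.cast_nonneg L)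
      linarith
    refine ⟨Nat.floor x + 1, by omega, ?_⟩
    set h := Nat.floor x + 1 with hhdef
    have hlow : (3-Real.sqrt 2)/7*((L:ℕ):ℝ) < (h:ℝ) := by
      have := Nat.lt_floor_add_one x
      rw [hhdef]
      push_cast
      linarith
    have hhi : (h:ℝ) ≤ (3-Real.sqrt 2)/7*((L:ℕ):ℝ) + 1 := by
      have := Nat.floor_le hx0
      rw [hhdef]
      push_cast
      linarith
    have hhL : h ≤ L := by
      have h1 : (h:ℝ) ≤ (L:ℝ) := by nlinarith
      exact_mod_cast h1
    have hh1 : 1 ≤ h := by omega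
    -- basic log facts
    have hF1 : ((L:ℕ):ℝ)*Real.log p ≤ Real.log n := by
      have hple : (p:ℝ)^L ≤ (n:ℝ) := by
        exact_mod_cast Nat.pow_log_le_self p (by omega : n ≠ 0)
      calc ((L:ℕ):ℝ)*Real.log p = Real.log ((p:ℝ)^L) := by rw [Real.log_pow]
        _ ≤ Real.log n := Real.log_le_log (by positivity) hple
    have hF2 : Real.log n ≤ (((L:ℕ):ℝ)+1)*Real.log p := by
      have hnlt : (n:ℝ) ≤ (p:ℝ)^(L+1) := by
        exact_mod_cast le_of_lt (Nat.lt_pow_succ_log_self (by omega : 1 < p) n)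
      calc Real.log n ≤ Real.log ((p:ℝ)^(L+1)) := Real.log_le_log (by positivity) hnlt
        _ = (((L:ℕ):ℝ)+1)*Real.log p := by rw [Real.log_pow]; push_cast; ring
    have hLn27 : (27:ℝ) ≤ Real.log n := by nlinarith
    have hll : 1 ≤ Real.log (Real.log n) := by
      rw [Real.le_log_iff_exp_le (by linarith)]
      have := Real.exp_one_lt_d9
      linarith
    -- log N bound
    have hmem : (h, h) ∈ slotSet p h n := mem_slotSet.2 ⟨le_refl h, by omega, le_refl h, hhL⟩
    have hN1 : 1 ≤ (slotSet p h n).card := Finset.card_pos.2 ⟨_, hmem⟩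
    have hNr : (1:ℝ) ≤ ((slotSet p h n).card:ℝ) := by exact_mod_cast hN1
    have hlN0 : 0 ≤ Real.log ((slotSet p h n).card) := Real.log_nonneg hNr
    have hlN : Real.log ((slotSet p h n).card) ≤ 3*Real.log (Real.log n) := by
      have hNle : ((slotSet p h n).card:ℝ) ≤ (((L:ℕ):ℝ)+1)^2 := by
        have := slotSet_card (p := p) (h := h) (n := n)
        calc ((slotSet p h n).card:ℝ) ≤ (((L+1)^2 : ℕ):ℝ) := by exact_mod_cast this
          _ = (((L:ℕ):ℝ)+1)^2 := by push_cast; ring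
      have h1 : Real.log ((slotSet p h n).card) ≤ Real.log ((((L:ℕ):ℝ)+1)^2) :=
        Real.log_le_log (by linarith) hNle
      have h2 : Real.log ((((L:ℕ):ℝ)+1)^2) = 2*Real.log (((L:ℕ):ℝ)+1) := by
        rw [Real.log_pow]; push_cast; ring
      have h3 : (((L:ℕ):ℝ)+1) ≤ 1.5*Real.log n := by
        have hLle : ((L:ℕ):ℝ) ≤ Real.log n/Real.log p := by
          rw [le_div_iff₀ hlp0]; exact hF1
        have t2 : 0.6931*((L:ℕ):ℝ) ≤ Real.log p*((L:ℕ):ℝ) :=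
          mul_le_mul_of_nonneg_right (by linarith) (Nat.cast_nonneg L)
        have t3 : ((L:ℕ):ℝ) ≤ 1.443*Real.log n := by
          rw [le_div_iff₀ hlp0] at hLle
          linarith [hLle, t2]
        linarith [hLn27]
      have h4 : Real.log (((L:ℕ):ℝ)+1) ≤ Real.log (1.5*Real.log n) :=
        Real.log_le_log (by positivity) h3
      have h5 : Real.log (1.5*Real.log n) = Real.log 1.5 + Real.log (Real.log n) :=
        Real.log_mul (by norm_num) (by linarith)
      have h6 : Real.log 1.5 ≤ 0.5 := by
        have := Real.log_le_sub_one_of_pos (show (0:ℝ) < 1.5 by norm_num)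
        linarith
      calc Real.log ((slotSet p h n).card) ≤ _ := h1
        _ = 2*Real.log (((L:ℕ):ℝ)+1) := h2
        _ ≤ 2*(0.5 + Real.log (Real.log n)) := by linarith
        _ ≤ 3*Real.log (Real.log n) := by linarith
    -- the two main bounds
    have hE := Epart_lb (h := h) (L := L) hL40 hlow hhi
    have hlog := log_count_lb (p := p) (h := h) (n := n) hp (by omega) hh1 hhL
    have hcore := glue_lb_core (Real.sqrt 2) (Real.log p) (Real.log n) ((L:ℕ):ℝ)
      (Epart h L) (Real.log ((slotSet p h n).card)) hsq hs14 hs15 (by linarith) hL40r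
      hF1 hF2 hE hll hlN0 hlN
    have hmaxge : Real.log (Real.log n) * (Real.log n)^2 ≤
        max 1 (Real.log (Real.log n) * (Real.log n)^2) := le_max_right _ _
    have hCmul : (10^6*(1+Real.log p)^3)*(Real.log (Real.log n) * (Real.log n)^2) ≤
        (10^6*(1+Real.log p)^3) * max 1 (Real.log (Real.log n) * (Real.log n)^2) :=
      mul_le_mul_of_nonneg_left hmaxge hCpos
    linarith

/-- `log (max over h of dim R^h_{≤n}) = ((9+4√2)/(294 (log p)^2)) (log n)^3
  + O(log log n · (log n)^2)`. -/
theorem stmt7 (p : ℕ) (hp : p.Prime) : ∃ C : ℝ, ∀ n : ℕ, 2 ≤ n →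
    (∀ h : ℕ, 1 ≤ h →
      Real.log (polyCountMRS p h n) ≤
        (9 + 4 * Real.sqrt 2) / (294 * (Real.log p) ^ 2) * (Real.log n) ^ 3 +
          C * max 1 (Real.log (Real.log n) * (Real.log n) ^ 2)) ∧
    (∃ h : ℕ, 1 ≤ h ∧
      (9 + 4 * Real.sqrt 2) / (294 * (Real.log p) ^ 2) * (Real.log n) ^ 3 -
          C * max 1 (Real.log (Real.log n) * (Real.log n) ^ 2) ≤
        Real.log (polyCountMRS p h n)) := by
  refine ⟨10^6*(1+Real.log p)^3, fun n hn => ⟨fun h hh => final_ub p n hp.two_le hn h hh, ?_⟩⟩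
  exact final_lb p n hp.two_le hn
end
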